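/- arXiv:1405.2225 — 5 statements merged into one kernel-verified Lean document; each statement's English description precedes it below -/
import Mathlib

section
/- Let Σ be a compatible split system on X. Then the following are equivalent: (i) T_Σ is an even X-tree; (ii) there exists a partition system Π on X with Σ_Π = Σ; (iii) there exists a strongly compatible partition system Π_s on X with Σ_{Π_s} = Σ. -/
open scoped Classical

/-- A weak X-tree: a finite tree together with a labelling map `lab : X → V`
such that every degree-one vertex (i.e. vertex with a unique neighbour) is labelled. -/
structure WeakXTree (X : Type) [Fintype X] [DecidableEq X] where
  V : Type
  [fintypeV : Fintype V]
  [decEqV : DecidableEq V]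
  G : SimpleGraph V
  isTree : G.IsTree
  lab : X → V
  leaf_labelled : ∀ v : V, (∃! w : V, G.Adj v w) → v ∈ Set.range lab

attribute [instance] WeakXTree.fintypeV WeakXTree.decEqV

variable {X : Type} [Fintype X] [DecidableEq X]

namespace WeakXTree

/-- A leaf is a vertex with a unique neighbour (degree one). -/
def IsLeaf (T : WeakXTree X) (v : T.V) : Prop := ∃! w : T.V, T.G.Adj v w

/-- The split of `X` displayed by an edge `e` of the tree: the (two) sets
`φ⁻¹(V₁)`, `φ⁻¹(V₂)` where `V₁, V₂` are the components of `T ∖ e`. -/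
noncomputable def splitOf (T : WeakXTree X) (e : Sym2 T.V) : Finset (Finset X) :=
  Finset.image (fun u : T.V =>
    Finset.univ.filter (fun x : X => (T.G.deleteEdges {e}).Reachable u (T.lab x)))
    Finset.univ

/-- The multiset of splits displayed by the edges of a weak X-tree. -/
noncomputable def splits (T : WeakXTree X) : Multiset (Finset (Finset X)) :=
  T.G.edgeFinset.val.map T.splitOf

end WeakXTree

/-- A partition of `X`: nonempty parts, every element of `X` in exactly one part. -/
def IsPartition (π : Finset (Finset X)) : Prop :=
  (∀ A ∈ π, A.Nonempty) ∧ ∀ x : X, ∃! A : Finset X, A ∈ π ∧ x ∈ A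

/-- A split of `X` is a partition of `X` into exactly two parts. -/
def IsSplit (σ : Finset (Finset X)) : Prop := IsPartition σ ∧ σ.card = 2

/-- A split system on `X` is a multiset of splits of `X`. -/
def IsSplitSystem (S : Multiset (Finset (Finset X))) : Prop := ∀ σ ∈ S, IsSplit σ

/-- Two splits `{A₁,B₁}` and `{A₂,B₂}` are compatible if one of the four
intersections of a part of one with a part of the other is empty. -/
def SplitsCompatible (σ₁ σ₂ : Finset (Finset X)) : Prop :=
  ∃ A ∈ σ₁, ∃ B ∈ σ₂, A ∩ B = ∅

/-- A split system is compatible if its splits are pairwise compatible. -/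
def CompatibleSystem (S : Multiset (Finset (Finset X))) : Prop :=
  ∀ σ₁ ∈ S, ∀ σ₂ ∈ S, SplitsCompatible σ₁ σ₂

/-- A partition system on `X`: a multiset of partitions of `X` into at least two parts. -/
def IsPartitionSystem (P : Multiset (Finset (Finset X))) : Prop :=
  ∀ π ∈ P, IsPartition π ∧ 2 ≤ π.card

/-- The multiset of splits `{A, X − A}` for `A` a part of the partition `π`. -/
def partitionSplits (π : Finset (Finset X)) : Multiset (Finset (Finset X)) :=
  π.val.map (fun A => ({A, Aᶜ} : Finset (Finset X)))

/-- `Σ_Π`: the multiset union over `π ∈ Π` of the splits `{A, X − A}`, `A ∈ π`. -/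
def systemSplits (P : Multiset (Finset (Finset X))) : Multiset (Finset (Finset X)) :=
  P.bind partitionSplits

/-- A partition system is strongly compatible if any two of its partitions are
equal or have parts whose union is `X`. -/
def StronglyCompatible (P : Multiset (Finset (Finset X))) : Prop :=
  ∀ π₁ ∈ P, ∀ π₂ ∈ P, π₁ = π₂ ∨ ∃ A ∈ π₁, ∃ B ∈ π₂, A ∪ B = Finset.univ

namespace WeakXTree

/-- A weak X-tree is even if all pairwise distances between labelled vertices are even. -/
def IsEven (T : WeakXTree X) : Prop :=
  ∀ x y : X, Even (T.G.dist (T.lab x) (T.lab y))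

/-- A vertex of a weak X-tree is even if it has even distance to some leaf. -/
def EvenVertex (T : WeakXTree X) (v : T.V) : Prop :=
  ∃ l : T.V, T.IsLeaf l ∧ Even (T.G.dist v l)

/-- A set `E` of edges of `T` displays the partition `π` if there is a bijection
`ξ : π → E` with `σ_{ξ(A)} = {A, X − A}` for each part `A ∈ π`. -/
def Displays (T : WeakXTree X) (E : Finset (Sym2 T.V)) (π : Finset (Finset X)) : Prop :=
  ↑E ⊆ T.G.edgeSet ∧ ∃ ξ : Finset X → Sym2 T.V,
    Set.BijOn ξ ↑π ↑E ∧ ∀ A ∈ π, T.splitOf (ξ A) = {A, Aᶜ}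

/-- The partition `π(v)` displayed by a vertex `v`: `x` and `y` are in the same
part iff the path from `φ(x)` to `φ(y)` does not pass through `v`. -/
noncomputable def vertexPartition (T : WeakXTree X) (v : T.V) : Finset (Finset X) :=
  Finset.image (fun x : X => Finset.univ.filter (fun y : X =>
    ∀ p : T.G.Walk (T.lab x) (T.lab y), p.IsPath → v ∉ p.support)) Finset.univ

end WeakXTree


section TreeLemmas
open SimpleGraph

variable {V : Type} {G : SimpleGraph V}

lemma reachable_of_walk_avoid {u v : V} (p : G.Walk u v) (s : Set (Sym2 V))
    (h : ∀ e ∈ p.edges, e ∉ s) : (G.deleteEdges s).Reachable u v :=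
  ⟨p.toDeleteEdges s h⟩

lemma tree_path_length (hG : G.IsTree) {u v : V} (p : G.Walk u v) (hp : p.IsPath) :
    p.length = G.dist u v := by
  obtain ⟨w, hw⟩ := (hG.isConnected u v).exists_walk_length_eq_dist
  have h1 : w.bypass.IsPath := w.bypass_isPath
  have h2 := (hG.existsUnique_path u v).unique hp h1
  have h3 := SimpleGraph.Walk.length_bypass_le w
  have h4 := SimpleGraph.dist_le p
  rw [h2] at h4 ⊢
  omega

lemma tree_dist_adj (hG : G.IsTree) {r u v : V} (h : G.Adj u v) :
    G.dist r v = G.dist r u + 1 ∨ G.dist r u = G.dist r v + 1 := by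
  obtain ⟨w, hw⟩ := (hG.isConnected r u).exists_walk_length_eq_dist
  set p := w.bypass with hpdef
  have hpp : p.IsPath := w.bypass_isPath
  have h5 : p.length = G.dist r u := tree_path_length hG p hpp
  by_cases hv : v ∈ p.support
  · right
    have h1 : (p.takeUntil v hv).length = G.dist r v :=
      tree_path_length hG _ (hpp.takeUntil hv)
    have h2 : (p.dropUntil v hv).length = G.dist v u :=
      tree_path_length hG _ (hpp.dropUntil hv)
    have h3 : p.length = (p.takeUntil v hv).length + (p.dropUntil v hv).length := by
      conv_lhs => rw [← Walk.take_spec p hv]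
      rw [Walk.length_append]
    have h4 : G.dist v u = 1 := by
      have hle : G.dist v u ≤ 1 := by
        simpa using SimpleGraph.dist_le (Walk.cons h.symm Walk.nil)
      have hpos : 0 < G.dist v u := (hG.isConnected v u).pos_dist_of_ne h.ne'
      omega
    omega
  · left
    have hq : (p.concat h).IsPath := by
      rw [← Walk.isPath_reverse_iff, Walk.reverse_concat]
      exact (Walk.cons_isPath_iff _ _).2 ⟨hpp.reverse, by simpa using hv⟩
    have h6 := tree_path_length hG _ hq
    rw [Walk.length_concat] at h6
    omega

lemma tree_parity_flip (hG : G.IsTree) {r u v : V} (h : G.Adj u v) :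
    Even (G.dist r u) ↔ ¬ Even (G.dist r v) := by
  rcases tree_dist_adj hG (r := r) h with h1 | h1
  · simp [h1, Nat.even_add_one]
  · simp [h1, Nat.even_add_one]

lemma tree_even_dist_iff (hG : G.IsTree) (r : V) (u v : V) :
    Even (G.dist u v) ↔ (Even (G.dist r u) ↔ Even (G.dist r v)) := by
  obtain ⟨w, hw⟩ := (hG.isConnected u v).exists_walk_length_eq_dist
  rw [← hw]; clear hw
  induction w with
  | nil => simp
  | @cons a b c h q ih =>
    have key := tree_parity_flip hG (r := r) h
    rw [Walk.length_cons, Nat.even_add_one]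
    rw [ih]
    tauto

lemma tree_not_reachable_deleteEdge (hG : G.IsTree) {u v : V} {p : G.Walk u v} (hp : p.IsPath)
    {e : Sym2 V} (he : e ∈ p.edges) : ¬ (G.deleteEdges {e}).Reachable u v := by
  induction p with
  | nil => simp at he
  | @cons a b c h q ih =>
    rw [Walk.edges_cons, List.mem_cons] at he
    have hq : q.IsPath := hp.of_cons
    have hnd := hp.edges_nodup
    rw [Walk.edges_cons, List.nodup_cons] at hnd
    rcases he with rfl | he
    · intro hr
      have hbr : G.IsBridge s(a, b) :=
        (isAcyclic_iff_forall_adj_isBridge.mp hG.IsAcyclic) h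
      have hq' : (G.deleteEdges {s(a, b)}).Reachable b c := by
        refine reachable_of_walk_avoid q _ ?_
        intro e' he' hm
        rw [Set.mem_singleton_iff] at hm
        exact hnd.1 (hm ▸ he')
      exact (isBridge_iff.mp hbr) (hr.trans hq'.symm)
    · intro hr
      have hne : s(a, b) ≠ e := fun hEq => hnd.1 (hEq ▸ he)
      have hadj : (G.deleteEdges {e}).Adj a b := by
        rw [SimpleGraph.deleteEdges_adj]
        exact ⟨h, by simpa using hne⟩
      exact ih hq he (hadj.symm.reachable.trans hr)

lemma reachable_deleteEdge_or (hG : G.Connected) {a b : V} (hab : G.Adj a b) (u : V) :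
    (G.deleteEdges {s(a, b)}).Reachable u a ∨ (G.deleteEdges {s(a, b)}).Reachable u b := by
  have key : ∀ {x y : V} (_ : G.Walk x y),
      ((G.deleteEdges {s(a, b)}).Reachable y a ∨ (G.deleteEdges {s(a, b)}).Reachable y b) →
      ((G.deleteEdges {s(a, b)}).Reachable x a ∨ (G.deleteEdges {s(a, b)}).Reachable x b) := by
    intro x y p
    induction p with
    | nil => exact id
    | @cons x' y' z h q ih =>
      intro hbase
      by_cases hme : s(x', y') = s(a, b)
      · rw [Sym2.eq_iff] at hme
        rcases hme with ⟨rfl, rfl⟩ | ⟨rfl, rfl⟩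
        · exact Or.inl (Reachable.refl _)
        · exact Or.inr (Reachable.refl _)
      · have hadj : (G.deleteEdges {s(a, b)}).Adj x' y' := by
          rw [SimpleGraph.deleteEdges_adj]
          exact ⟨h, by simpa using hme⟩
        rcases ih hbase with h1 | h1
        · exact Or.inl (hadj.reachable.trans h1)
        · exact Or.inr (hadj.reachable.trans h1)
  obtain ⟨p⟩ := hG u a
  exact key p (Or.inl (Reachable.refl _))

lemma tree_card_separating (hG : G.IsTree) [Fintype V] [DecidableEq V] (u v : V) :
    (G.edgeFinset.val.filter
      (fun e => ¬ (G.deleteEdges {e}).Reachable u v)).card = G.dist u v := by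
  obtain ⟨w, hw⟩ := (hG.isConnected u v).exists_walk_length_eq_dist
  set p := w.bypass with hpdef
  have hpp : p.IsPath := w.bypass_isPath
  have hlen : p.length = G.dist u v := tree_path_length hG p hpp
  have hiff : ∀ e ∈ G.edgeFinset.val,
      (¬ (G.deleteEdges {e}).Reachable u v) ↔ e ∈ p.edges := by
    intro e _
    constructor
    · intro hnr
      by_contra hmem
      refine hnr (reachable_of_walk_avoid p _ ?_)
      intro e' he' hm
      rw [Set.mem_singleton_iff] at hm
      exact hmem (hm ▸ he')
    · intro hmem
      exact tree_not_reachable_deleteEdge hG hpp hmem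
  rw [Multiset.filter_congr hiff]
  have heq : G.edgeFinset.val.filter (fun e => e ∈ p.edges) = (p.edges : Multiset (Sym2 V)) := by
    refine (Multiset.Nodup.ext (Multiset.Nodup.filter _ G.edgeFinset.nodup)
      (by exact_mod_cast hpp.edges_nodup)).2 ?_
    intro e
    simp only [Multiset.mem_filter, Multiset.mem_coe]
    constructor
    · rintro ⟨-, h2⟩; exact h2
    · intro h2
      refine ⟨?_, h2⟩
      rw [Finset.mem_val, SimpleGraph.mem_edgeFinset]
      exact p.edges_subset_edgeSet h2
  rw [heq]
  simpa using hlen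

end TreeLemmas

section EvenDirection

open SimpleGraph

variable {X : Type} [Fintype X] [DecidableEq X]

lemma sep_splitOf_iff (T : WeakXTree X) (x y : X) (e : Sym2 T.V) :
    (∃ A ∈ T.splitOf e, x ∈ A ∧ y ∉ A) ↔
      ¬ (T.G.deleteEdges {e}).Reachable (T.lab x) (T.lab y) := by
  constructor
  · rintro ⟨A, hA, hx, hy⟩ hr
    rw [WeakXTree.splitOf, Finset.mem_image] at hA
    obtain ⟨u, -, rfl⟩ := hA
    rw [Finset.mem_filter] at hx hy
    exact hy ⟨Finset.mem_univ _, hx.2.trans hr⟩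
  · intro hnr
    refine ⟨Finset.univ.filter (fun z => (T.G.deleteEdges {e}).Reachable (T.lab x) (T.lab z)),
      ?_, ?_, ?_⟩
    · rw [WeakXTree.splitOf, Finset.mem_image]
      exact ⟨T.lab x, Finset.mem_univ _, rfl⟩
    · simp [Reachable.refl]
    · simp [hnr]

lemma even_card_filter_partition (π : Finset (Finset X)) (hπ : IsPartition π) (x y : X) :
    Even (((partitionSplits π).filter (fun σ => ∃ A ∈ σ, x ∈ A ∧ y ∉ A)).card) := by
  rw [partitionSplits, Multiset.filter_map, Multiset.card_map]
  set q : Finset X → Prop := fun A =>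
    (∃ B ∈ ({A, Aᶜ} : Finset (Finset X)), x ∈ B ∧ y ∉ B) with hq
  have hqiff : ∀ A : Finset X, q A ↔ ((x ∈ A ∧ y ∉ A) ∨ (x ∉ A ∧ y ∈ A)) := by
    intro A
    constructor
    · rintro ⟨B, hB, hx, hy⟩
      rw [Finset.mem_insert, Finset.mem_singleton] at hB
      rcases hB with rfl | rfl
      · exact Or.inl ⟨hx, hy⟩
      · rw [Finset.mem_compl] at hx
        have : y ∈ A := by by_contra hyA; exact hy (Finset.mem_compl.2 hyA)
        exact Or.inr ⟨hx, this⟩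
    · rintro (⟨h1, h2⟩ | ⟨h1, h2⟩)
      · exact ⟨A, Finset.mem_insert_self _ _, h1, h2⟩
      · refine ⟨Aᶜ, by simp, Finset.mem_compl.2 h1, by simp [h2]⟩
  obtain ⟨Ax, ⟨hAxm, hxAx⟩, hux⟩ := hπ.2 x
  obtain ⟨Ay, ⟨hAym, hyAy⟩, huy⟩ := hπ.2 y
  by_cases hxy : Ax = Ay
  · have : π.val.filter (fun A => q A) = 0 := by
      rw [Multiset.filter_eq_nil]
      intro A hA hqA
      rcases (hqiff A).1 hqA with ⟨h1, h2⟩ | ⟨h1, h2⟩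
      · exact h2 (by rw [hux A ⟨hA, h1⟩, hxy]; exact hyAy)
      · exact h1 (by rw [huy A ⟨hA, h2⟩, ← hxy]; exact hxAx)
    simp only [Function.comp] at this ⊢
    rw [this]
    simp
  · have hne : y ∉ Ax := fun hy => hxy (huy Ax ⟨hAxm, hy⟩)
    have hne' : x ∉ Ay := fun hx => hxy (hux Ay ⟨hAym, hx⟩).symm
    have : π.val.filter (fun A => q A) = Ax ::ₘ {Ay} := by
      refine (Multiset.Nodup.ext (Multiset.Nodup.filter _ π.nodup) ?_).2 ?_
      · rw [Multiset.nodup_cons]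
        exact ⟨by simpa using hxy, Multiset.nodup_singleton _⟩
      · intro A
        rw [Multiset.mem_filter]
        constructor
        · rintro ⟨hA, hqA⟩
          rcases (hqiff A).1 hqA with ⟨h1, _⟩ | ⟨_, h2⟩
          · rw [hux A ⟨hA, h1⟩]; simp
          · rw [huy A ⟨hA, h2⟩]; simp
        · intro hA
          rcases Multiset.mem_cons.1 hA with rfl | hA
          · exact ⟨hAxm, (hqiff A).2 (Or.inl ⟨hxAx, hne⟩)⟩
          · rw [Multiset.mem_singleton] at hA
            subst hA
            exact ⟨hAym, (hqiff A).2 (Or.inr ⟨hne', hyAy⟩)⟩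
    simp only [Function.comp] at this ⊢
    rw [this]
    simp [even_iff_two_dvd]

lemma even_of_partition_system (T : WeakXTree X) (P : Multiset (Finset (Finset X)))
    (hP : IsPartitionSystem P) (hPS : systemSplits P = T.splits) : T.IsEven := by
  intro x y
  have hG := T.isTree
  have key1 : (Multiset.filter (fun σ => ∃ A ∈ σ, x ∈ A ∧ y ∉ A) T.splits).card
      = T.G.dist (T.lab x) (T.lab y) := by
    rw [WeakXTree.splits, Multiset.filter_map, Multiset.card_map]
    have hcg : Multiset.filter ((fun σ => ∃ A ∈ σ, x ∈ A ∧ y ∉ A) ∘ T.splitOf)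
          T.G.edgeFinset.val
        = Multiset.filter (fun e => ¬ (T.G.deleteEdges {e}).Reachable (T.lab x) (T.lab y))
          T.G.edgeFinset.val :=
      Multiset.filter_congr (fun e _ => by simpa [Function.comp] using sep_splitOf_iff T x y e)
    rw [hcg, tree_card_separating hG]
  have key2 : ∀ (Q : Multiset (Finset (Finset X))), (∀ π ∈ Q, IsPartition π) →
      Even ((Multiset.filter (fun σ => ∃ A ∈ σ, x ∈ A ∧ y ∉ A) (systemSplits Q)).card) := by
    intro Q
    induction Q using Multiset.induction_on with
    | empty => intro _; simp [systemSplits]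
    | cons a s ih =>
      intro h
      rw [systemSplits, Multiset.cons_bind, Multiset.filter_add, Multiset.card_add]
      refine Even.add (even_card_filter_partition a (h a (Multiset.mem_cons_self a s)) x y) ?_
      exact ih (fun π hπ => h π (Multiset.mem_cons_of_mem hπ))
  have hfin := key2 P (fun π hπ => (hP π hπ).1)
  rw [hPS, key1] at hfin
  exact hfin

section Construction

open SimpleGraph

lemma walk_edges_not_mem {V : Type} {G : SimpleGraph V} {u v w : V} (p : G.Walk u v)
    (hw : w ∉ p.support) {e : Sym2 V} (he : e ∈ p.edges) : w ∉ e := by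
  induction e using Sym2.ind with
  | _ a b =>
    intro hmem
    rcases Sym2.mem_iff.1 hmem with rfl | rfl
    · exact hw (p.fst_mem_support_of_mem_edges he)
    · exact hw (p.snd_mem_support_of_mem_edges he)

lemma tree_bridge_not_reachable {V : Type} {G : SimpleGraph V} (hG : G.IsTree)
    {v w : V} (h : G.Adj v w) : ¬ (G.deleteEdges {s(v, w)}).Reachable v w :=
  (SimpleGraph.isBridge_iff.mp
    ((isAcyclic_iff_forall_adj_isBridge.mp hG.IsAcyclic) h))

variable {X : Type} [Fintype X] [DecidableEq X]

namespace WeakXTree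

variable (T : WeakXTree X)

/-- The tree with all edges at `v` removed. -/
noncomputable def Gv (v : T.V) : SimpleGraph T.V := T.G.deleteEdges {e : Sym2 T.V | v ∈ e}

/-- The part of the partition at `v` containing the label `x`. -/
noncomputable def partOf (v : T.V) (x : X) : Finset X :=
  Finset.univ.filter (fun y => (T.Gv v).Reachable (T.lab x) (T.lab y))

/-- The partition of `X` induced by the components of `T − v`. -/
noncomputable def piAt (v : T.V) : Finset (Finset X) :=
  Finset.image (T.partOf v) Finset.univ

/-- The side of the split of edge `e` seen from vertex `u`. -/
noncomputable def sideOf (e : Sym2 T.V) (u : T.V) : Finset X :=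
  Finset.univ.filter (fun x => (T.G.deleteEdges {e}).Reachable u (T.lab x))

/-- The edges incident to `v`. -/
noncomputable def inc (v : T.V) : Finset (Sym2 T.V) :=
  T.G.edgeFinset.filter (fun e => v ∈ e)

variable {T}

lemma Gv_reachable_self_iff {v u : T.V} : (T.Gv v).Reachable v u ↔ v = u := by
  constructor
  · rintro ⟨p⟩
    cases p with
    | nil => rfl
    | cons h q =>
      rw [Gv, SimpleGraph.deleteEdges_adj] at h
      exact absurd (Set.mem_setOf_eq ▸ Sym2.mem_mk_left _ _) h.2
  · rintro rfl; exact Reachable.refl _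

lemma Gv_le_deleteEdge {v : T.V} {e : Sym2 T.V} (he : v ∈ e) :
    T.Gv v ≤ T.G.deleteEdges {e} :=
  SimpleGraph.deleteEdges_anti (by simpa using he)

lemma reachable_deleteEdge_iff_Gv (hvw : T.G.Adj v w) (z : T.V) :
    (T.G.deleteEdges {s(v, w)}).Reachable w z ↔ (T.Gv v).Reachable w z := by
  constructor
  · rintro ⟨p⟩
    have hvsup : v ∉ p.support := by
      intro hv
      exact tree_bridge_not_reachable T.isTree hvw ⟨(p.takeUntil v hv).reverse⟩
    refine ⟨p.transfer (T.Gv v) ?_⟩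
    intro e' he'
    have h1 : e' ∈ (T.G.deleteEdges {s(v, w)}).edgeSet := p.edges_subset_edgeSet he'
    rw [SimpleGraph.edgeSet_deleteEdges] at h1
    rw [Gv, SimpleGraph.edgeSet_deleteEdges]
    exact ⟨h1.1, by simpa using walk_edges_not_mem p hvsup he'⟩
  · exact fun h => h.mono (Gv_le_deleteEdge (Sym2.mem_mk_left _ _))

lemma not_Gv_reachable_of_ne {v w₁ w₂ : T.V} (h1 : T.G.Adj v w₁) (h2 : T.G.Adj v w₂)
    (hne : w₁ ≠ w₂) : ¬ (T.Gv v).Reachable w₁ w₂ := by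
  intro hr
  have hr1 : (T.G.deleteEdges {s(v, w₁)}).Reachable w₁ w₂ :=
    hr.mono (Gv_le_deleteEdge (Sym2.mem_mk_left _ _))
  have hadj : (T.G.deleteEdges {s(v, w₁)}).Adj v w₂ := by
    rw [SimpleGraph.deleteEdges_adj]
    refine ⟨h2, ?_⟩
    rw [Set.mem_singleton_iff, Sym2.eq_iff]
    rintro (⟨-, rfl⟩ | ⟨rfl, rfl⟩)
    · exact hne rfl
    · exact h2.ne rfl
  exact tree_bridge_not_reachable T.isTree h1 (hadj.reachable.trans hr1.symm)

/-- First step of the path from `v` to `z`. -/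
lemma exists_step {v z : T.V} (hvz : v ≠ z) :
    ∃ w, T.G.Adj v w ∧ (T.Gv v).Reachable w z := by
  obtain ⟨p0⟩ := T.isTree.isConnected v z
  have hpp : p0.bypass.IsPath := p0.bypass_isPath
  cases hb : p0.bypass with
  | nil => exact absurd hvz (by simp)
  | cons h q =>
    rw [hb] at hpp
    rw [Walk.cons_isPath_iff] at hpp
    refine ⟨_, h, ⟨q.transfer (T.Gv v) ?_⟩⟩
    intro e' he'
    rw [Gv, SimpleGraph.edgeSet_deleteEdges]
    exact ⟨q.edges_subset_edgeSet he', by simpa using walk_edges_not_mem q hpp.2 he'⟩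

end WeakXTree

end Construction

section Construction2

open SimpleGraph

variable {X : Type} [Fintype X] [DecidableEq X]

namespace WeakXTree

variable {T : WeakXTree X}

/-- Every component of `T − v` contains a label. -/
lemma exists_label_side (v w : T.V) (hvw : T.G.Adj v w) :
    ∃ x : X, (T.Gv v).Reachable w (T.lab x) := by
  have hG := T.isTree
  set C : Finset T.V := Finset.univ.filter (fun u => (T.Gv v).Reachable w u) with hC
  have hwC : w ∈ C := by rw [hC, Finset.mem_filter]; exact ⟨Finset.mem_univ _, Reachable.refl _⟩
  obtain ⟨u, huC, hmax⟩ := C.exists_max_image (fun u => T.G.dist v u) ⟨w, hwC⟩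
  rw [hC, Finset.mem_filter] at huC
  have hru : (T.Gv v).Reachable w u := huC.2
  have hvu : u ≠ v := by
    rintro rfl
    exact hvw.ne' (Gv_reachable_self_iff.1 hru.symm).symm
  have hd : 0 < T.G.dist v u := (hG.isConnected v u).pos_dist_of_ne (Ne.symm hvu)
  obtain ⟨w0, hw0, -⟩ := exists_step (T := T) hvu
  have hnb : ∀ w', T.G.Adj u w' → T.G.dist v w' + 1 = T.G.dist v u := by
    intro w' hadj
    rcases tree_dist_adj hG (r := v) hadj with h1 | h1
    · exfalso
      have hw'v : w' ≠ v := by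
        rintro rfl
        rw [SimpleGraph.dist_self] at h1
        omega
      have hw'C : w' ∈ C := by
        rw [hC, Finset.mem_filter]
        refine ⟨Finset.mem_univ _, hru.trans (Adj.reachable ?_)⟩
        rw [Gv, SimpleGraph.deleteEdges_adj]
        refine ⟨hadj, ?_⟩
        simp only [Set.mem_setOf_eq, Sym2.mem_iff]
        push_neg
        exact ⟨Ne.symm hvu, Ne.symm hw'v⟩
      have := hmax w' hw'C
      omega
    · omega
  have huniq : ∀ w1 w2, T.G.Adj u w1 → T.G.Adj u w2 → w1 = w2 := by
    intro a b ha hb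
    obtain ⟨pa0⟩ := hG.isConnected v a
    obtain ⟨pb0⟩ := hG.isConnected v b
    set pa := pa0.bypass with hpa0
    set pb := pb0.bypass with hpb0
    have hpa : pa.IsPath := pa0.bypass_isPath
    have hpb : pb.IsPath := pb0.bypass_isPath
    have hla : pa.length = T.G.dist v a := tree_path_length hG pa hpa
    have hlb : pb.length = T.G.dist v b := tree_path_length hG pb hpb
    have hua : u ∉ pa.support := by
      intro hu
      have h1 := tree_path_length hG (pa.takeUntil u hu) (hpa.takeUntil hu)
      have h2 := Walk.length_takeUntil_le pa hu
      have h3 := hnb a ha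
      omega
    have hub : u ∉ pb.support := by
      intro hu
      have h1 := tree_path_length hG (pb.takeUntil u hu) (hpb.takeUntil hu)
      have h2 := Walk.length_takeUntil_le pb hu
      have h3 := hnb b hb
      omega
    have hqa : (pa.concat ha.symm).IsPath := by
      rw [← Walk.isPath_reverse_iff, Walk.reverse_concat]
      exact (Walk.cons_isPath_iff _ _).2 ⟨hpa.reverse, by simpa using hua⟩
    have hqb : (pb.concat hb.symm).IsPath := by
      rw [← Walk.isPath_reverse_iff, Walk.reverse_concat]
      exact (Walk.cons_isPath_iff _ _).2 ⟨hpb.reverse, by simpa using hub⟩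
    have heq := (hG.existsUnique_path v u).unique hqa hqb
    have h2 := congrArg Walk.support (congrArg Walk.reverse heq)
    rw [Walk.reverse_concat, Walk.reverse_concat, Walk.support_cons, Walk.support_cons,
      Walk.support_eq_cons pa.reverse, Walk.support_eq_cons pb.reverse] at h2
    simp only [List.cons.injEq] at h2
    exact h2.2.1.symm ▸ rfl
  have hleaf : ∃! w', T.G.Adj u w' := ⟨w0, hw0, fun y hy => huniq y w0 hy hw0⟩
  obtain ⟨x, hx⟩ := T.leaf_labelled u hleaf
  exact ⟨x, hx ▸ hru⟩

lemma mem_partOf_iff {v : T.V} {x y : X} :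
    y ∈ T.partOf v x ↔ (T.Gv v).Reachable (T.lab x) (T.lab y) := by
  simp [partOf]

lemma mem_partOf_self {v : T.V} (x : X) : x ∈ T.partOf v x :=
  mem_partOf_iff.2 (Reachable.refl _)

lemma partOf_eq_of_reachable {v : T.V} {x y : X}
    (h : (T.Gv v).Reachable (T.lab x) (T.lab y)) : T.partOf v x = T.partOf v y := by
  ext z
  rw [mem_partOf_iff, mem_partOf_iff]
  exact ⟨fun hz => h.symm.trans hz, fun hz => h.trans hz⟩

lemma eq_partOf_of_mem {v : T.V} {A : Finset X} (hA : A ∈ T.piAt v) {x : X} (hx : x ∈ A) :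
    A = T.partOf v x := by
  rw [piAt, Finset.mem_image] at hA
  obtain ⟨x', -, rfl⟩ := hA
  exact partOf_eq_of_reachable (mem_partOf_iff.1 hx)

lemma isPartition_piAt (v : T.V) : IsPartition (T.piAt v) := by
  constructor
  · intro A hA
    rw [piAt, Finset.mem_image] at hA
    obtain ⟨x, -, rfl⟩ := hA
    exact ⟨x, mem_partOf_self x⟩
  · intro x
    refine ⟨T.partOf v x, ⟨Finset.mem_image_of_mem _ (Finset.mem_univ x), mem_partOf_self x⟩, ?_⟩
    rintro A ⟨hA, hxA⟩
    exact eq_partOf_of_mem hA hxA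

lemma sideOf_eq_class {v w : T.V} (hvw : T.G.Adj v w) {x : X}
    (hx : (T.Gv v).Reachable w (T.lab x)) : T.partOf v x = T.sideOf s(v, w) w := by
  ext y
  rw [mem_partOf_iff, sideOf, Finset.mem_filter]
  rw [reachable_deleteEdge_iff_Gv hvw]
  exact ⟨fun h => ⟨Finset.mem_univ _, hx.trans h⟩, fun h => hx.symm.trans h.2⟩

lemma sideOf_compl {v w : T.V} (hvw : T.G.Adj v w) :
    T.sideOf s(v, w) v = (T.sideOf s(v, w) w)ᶜ := by
  ext x
  rw [Finset.mem_compl, sideOf, sideOf, Finset.mem_filter, Finset.mem_filter]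
  constructor
  · rintro ⟨-, h⟩ ⟨-, h'⟩
    exact tree_bridge_not_reachable T.isTree hvw (h.trans h'.symm)
  · intro h
    refine ⟨Finset.mem_univ _, ?_⟩
    rcases reachable_deleteEdge_or (T.isTree.isConnected) hvw (T.lab x) with h1 | h1
    · exact h1.symm
    · exact absurd ⟨Finset.mem_univ _, h1.symm⟩ h

lemma splitOf_eq {v w : T.V} (hvw : T.G.Adj v w) :
    T.splitOf s(v, w) = {T.sideOf s(v, w) w, (T.sideOf s(v, w) w)ᶜ} := by
  rw [← sideOf_compl hvw]
  ext B
  rw [splitOf, Finset.mem_image]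
  constructor
  · rintro ⟨u, -, rfl⟩
    rcases reachable_deleteEdge_or (T.isTree.isConnected) hvw u with h1 | h1
    · have : Finset.univ.filter
          (fun x => (T.G.deleteEdges {s(v, w)}).Reachable u (T.lab x)) = T.sideOf s(v, w) v := by
        ext x
        rw [sideOf, Finset.mem_filter, Finset.mem_filter]
        exact ⟨fun h => ⟨h.1, h1.symm.trans h.2⟩, fun h => ⟨h.1, h1.trans h.2⟩⟩
      rw [this]
      simp
    · have : Finset.univ.filter
          (fun x => (T.G.deleteEdges {s(v, w)}).Reachable u (T.lab x)) = T.sideOf s(v, w) w := by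
        ext x
        rw [sideOf, Finset.mem_filter, Finset.mem_filter]
        exact ⟨fun h => ⟨h.1, h1.symm.trans h.2⟩, fun h => ⟨h.1, h1.trans h.2⟩⟩
      rw [this]
      simp
  · intro hB
    rcases Finset.mem_insert.1 hB with rfl | hB
    · exact ⟨w, Finset.mem_univ _, rfl⟩
    · rw [Finset.mem_singleton] at hB
      exact ⟨v, Finset.mem_univ _, hB ▸ rfl⟩

end WeakXTree

end Construction2

section Construction3

open SimpleGraph

variable {X : Type} [Fintype X] [DecidableEq X]

namespace WeakXTree

variable {T : WeakXTree X}

/-- The neighbour of `v` in the direction of the part `A`. -/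
noncomputable def nbrOf (T : WeakXTree X) (v : T.V) (A : Finset X) : T.V :=
  if h : ∃ w, T.G.Adj v w ∧ ∃ x ∈ A, (T.Gv v).Reachable w (T.lab x) then h.choose else v

lemma nbrOf_exists {v : T.V} (hvlab : ∀ x : X, T.lab x ≠ v) {A : Finset X}
    (hA : A ∈ T.piAt v) :
    ∃ w, T.G.Adj v w ∧ ∃ x ∈ A, (T.Gv v).Reachable w (T.lab x) := by
  obtain ⟨x, -, rfl⟩ := Finset.mem_image.1 hA
  obtain ⟨w, hw, hr⟩ := exists_step (T := T) (Ne.symm (hvlab x))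
  exact ⟨w, hw, x, mem_partOf_self x, hr⟩

lemma nbrOf_spec {v : T.V} (hvlab : ∀ x : X, T.lab x ≠ v) {A : Finset X}
    (hA : A ∈ T.piAt v) :
    T.G.Adj v (T.nbrOf v A) ∧ A = T.sideOf s(v, T.nbrOf v A) (T.nbrOf v A) := by
  have h := nbrOf_exists hvlab hA
  rw [nbrOf, dif_pos h]
  obtain ⟨hadj, x, hxA, hr⟩ := h.choose_spec
  exact ⟨hadj, (eq_partOf_of_mem hA hxA).trans (sideOf_eq_class hadj hr)⟩

lemma nbr_unique {v w w' : T.V} (h : T.G.Adj v w) (h' : T.G.Adj v w')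
    {x x' : X} (hx : (T.Gv v).Reachable w (T.lab x)) (hx' : (T.Gv v).Reachable w' (T.lab x'))
    (hxx : (T.Gv v).Reachable (T.lab x) (T.lab x')) : w = w' := by
  by_contra hne
  exact not_Gv_reachable_of_ne h h' hne ((hx.trans hxx).trans hx'.symm)

lemma inc_eq_image {v : T.V} (hvlab : ∀ x : X, T.lab x ≠ v) :
    T.inc v = (T.piAt v).image (fun A => s(v, T.nbrOf v A)) := by
  ext e
  rw [inc, Finset.mem_filter, Finset.mem_image]
  constructor
  · rintro ⟨hef, hve⟩
    induction e using Sym2.ind with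
    | _ a b =>
      have hab : T.G.Adj a b := by rwa [SimpleGraph.mem_edgeFinset, SimpleGraph.mem_edgeSet] at hef
      -- reduce to the case a = v
      obtain ⟨w, hw, heq⟩ : ∃ w, T.G.Adj v w ∧ s(a, b) = s(v, w) := by
        rcases Sym2.mem_iff.1 hve with rfl | rfl
        · exact ⟨b, hab, rfl⟩
        · exact ⟨a, hab.symm, Sym2.eq_swap⟩
      rw [heq]
      obtain ⟨x, hx⟩ := exists_label_side v w hw
      refine ⟨T.partOf v x, Finset.mem_image_of_mem _ (Finset.mem_univ x), ?_⟩
      have h := nbrOf_exists hvlab (Finset.mem_image_of_mem _ (Finset.mem_univ x))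
      rw [nbrOf, dif_pos h]
      obtain ⟨hadj, x', hxA', hr'⟩ := h.choose_spec
      have : h.choose = w :=
        nbr_unique hadj hw hr' hx ((mem_partOf_iff.1 hxA').symm)
      rw [this]
  · rintro ⟨A, hA, rfl⟩
    have hs := nbrOf_spec hvlab hA
    constructor
    · rw [SimpleGraph.mem_edgeFinset, SimpleGraph.mem_edgeSet]; exact hs.1
    · exact Sym2.mem_mk_left _ _

lemma nbrOf_injOn {v : T.V} (hvlab : ∀ x : X, T.lab x ≠ v) :
    Set.InjOn (fun A => s(v, T.nbrOf v A)) (T.piAt v) := by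
  intro A₁ h₁ A₂ h₂ he
  simp only [Sym2.eq_iff] at he
  have hs₁ := nbrOf_spec hvlab h₁
  have hs₂ := nbrOf_spec hvlab h₂
  have hw : T.nbrOf v A₁ = T.nbrOf v A₂ := by
    rcases he with ⟨-, h⟩ | ⟨h1, h2⟩
    · exact h
    · exfalso
      have := hs₁.1
      rw [h2] at this
      exact this.ne rfl
  rw [hs₁.2, hs₂.2, hw]

lemma partitionSplits_piAt {v : T.V} (hvlab : ∀ x : X, T.lab x ≠ v) :
    partitionSplits (T.piAt v) = (T.inc v).val.map T.splitOf := by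
  rw [partitionSplits, inc_eq_image hvlab, Finset.image_val_of_injOn (nbrOf_injOn hvlab),
    Multiset.map_map]
  refine Multiset.map_congr rfl ?_
  intro A hA
  rw [Finset.mem_val] at hA
  have hs := nbrOf_spec hvlab hA
  simp only [Function.comp]
  rw [splitOf_eq hs.1, ← hs.2]

lemma two_le_card_piAt {v : T.V} (hvlab : ∀ x : X, T.lab x ≠ v) (x₀ : X) :
    2 ≤ (T.piAt v).card := by
  have hne : v ≠ T.lab x₀ := Ne.symm (hvlab x₀)
  obtain ⟨w₁, hw₁, -⟩ := exists_step (T := T) hne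
  have hnotleaf : ¬ ∃! w, T.G.Adj v w := by
    intro h
    obtain ⟨x, hx⟩ := T.leaf_labelled v h
    exact hvlab x hx
  have : ∃ w₂, T.G.Adj v w₂ ∧ w₂ ≠ w₁ := by
    by_contra hcon
    push_neg at hcon
    exact hnotleaf ⟨w₁, hw₁, fun y hy => by
      by_contra hne'
      exact hne' (hcon y hy)⟩
  obtain ⟨w₂, hw₂, hww⟩ := this
  obtain ⟨x₁, hx₁⟩ := exists_label_side v w₁ hw₁
  obtain ⟨x₂, hx₂⟩ := exists_label_side v w₂ hw₂
  have hne' : T.partOf v x₁ ≠ T.partOf v x₂ := by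
    intro he
    have hm := mem_partOf_self (T := T) (v := v) x₂
    rw [← he] at hm
    exact not_Gv_reachable_of_ne hw₁ hw₂ (Ne.symm hww)
      ((hx₁.trans (mem_partOf_iff.1 hm)).trans hx₂.symm)
  exact Finset.one_lt_card.2 ⟨_, Finset.mem_image_of_mem _ (Finset.mem_univ x₁),
    _, Finset.mem_image_of_mem _ (Finset.mem_univ x₂), hne'⟩

end WeakXTree

end Construction3

section Construction4

open SimpleGraph

variable {X : Type} [Fintype X] [DecidableEq X]

namespace WeakXTree

variable {T : WeakXTree X}

lemma edge_partition (r : T.V) :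
    T.G.edgeFinset.val =
      ((Finset.univ.filter (fun v : T.V => ¬ Even (T.G.dist r v))).val).bind
        (fun v => (T.inc v).val) := by
  set W := Finset.univ.filter (fun v : T.V => ¬ Even (T.G.dist r v)) with hW
  have hdisj : (W : Set T.V).PairwiseDisjoint (fun v => T.inc v) := by
    intro v₁ h₁ v₂ h₂ hne
    rw [Function.onFun, Finset.disjoint_left]
    intro e he₁ he₂
    rw [inc, Finset.mem_filter] at he₁ he₂
    have hadj : T.G.Adj v₁ v₂ := by
      have hedge : e ∈ T.G.edgeSet := SimpleGraph.mem_edgeFinset.1 he₁.1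
      induction e using Sym2.ind with
      | _ a b =>
        rcases Sym2.mem_iff.1 he₁.2 with rfl | rfl <;>
          rcases Sym2.mem_iff.1 he₂.2 with rfl | rfl
        · exact absurd rfl hne
        · exact (T.G.mem_edgeSet).1 hedge
        · exact ((T.G.mem_edgeSet).1 hedge).symm
        · exact absurd rfl hne
    have hflip := tree_parity_flip T.isTree (r := r) hadj
    rw [Finset.mem_coe, hW, Finset.mem_filter] at h₁ h₂
    tauto
  have hfin : T.G.edgeFinset = W.disjiUnion (fun v => T.inc v) hdisj := by
    ext e
    rw [Finset.mem_disjiUnion]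
    constructor
    · intro he
      induction e using Sym2.ind with
      | _ a b =>
        have hab : T.G.Adj a b := (T.G.mem_edgeSet).1 (SimpleGraph.mem_edgeFinset.1 he)
        have hflip := tree_parity_flip T.isTree (r := r) hab
        by_cases ha : Even (T.G.dist r a)
        · refine ⟨b, ?_, ?_⟩
          · rw [hW, Finset.mem_filter]
            exact ⟨Finset.mem_univ _, hflip.1 ha⟩
          · rw [inc, Finset.mem_filter]
            exact ⟨he, Sym2.mem_mk_right _ _⟩
        · refine ⟨a, ?_, ?_⟩
          · rw [hW, Finset.mem_filter]
            exact ⟨Finset.mem_univ _, ha⟩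
          · rw [inc, Finset.mem_filter]
            exact ⟨he, Sym2.mem_mk_left _ _⟩
    · rintro ⟨v, -, he⟩
      rw [inc, Finset.mem_filter] at he
      exact he.1
  conv_lhs => rw [hfin]
  rw [Finset.disjiUnion_val]

lemma strong_pair (v₁ v₂ : T.V) (hne : v₁ ≠ v₂) :
    ∃ A ∈ T.piAt v₁, ∃ B ∈ T.piAt v₂, A ∪ B = Finset.univ := by
  obtain ⟨w₁, hw₁, hr₁⟩ := exists_step (T := T) hne
  obtain ⟨w₂, hw₂, hr₂⟩ := exists_step (T := T) (Ne.symm hne)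
  obtain ⟨x₁, hx₁⟩ := exists_label_side v₁ w₁ hw₁
  obtain ⟨x₂, hx₂⟩ := exists_label_side v₂ w₂ hw₂
  refine ⟨T.partOf v₁ x₁, Finset.mem_image_of_mem _ (Finset.mem_univ _),
         T.partOf v₂ x₂, Finset.mem_image_of_mem _ (Finset.mem_univ _), ?_⟩
  rw [sideOf_eq_class hw₁ hx₁, sideOf_eq_class hw₂ hx₂]
  ext x
  simp only [Finset.mem_union, Finset.mem_univ, iff_true]
  by_cases hxA : x ∈ T.sideOf s(v₁, w₁) w₁
  · exact Or.inl hxA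
  · right
    rw [sideOf, Finset.mem_filter] at hxA ⊢
    refine ⟨Finset.mem_univ _, ?_⟩
    have hnr : ¬ (T.G.deleteEdges {s(v₁, w₁)}).Reachable w₁ (T.lab x) :=
      fun h => hxA ⟨Finset.mem_univ _, h⟩
    have hx1 : (T.G.deleteEdges {s(v₁, w₁)}).Reachable (T.lab x) v₁ := by
      rcases reachable_deleteEdge_or T.isTree.isConnected hw₁ (T.lab x) with h | h
      · exact h
      · exact absurd h.symm hnr
    have hα : (T.G.deleteEdges {s(v₁, w₁)}).Reachable w₁ v₂ :=
      hr₁.mono (Gv_le_deleteEdge (Sym2.mem_mk_left _ _))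
    have hδ : (T.G.deleteEdges {s(v₂, w₂)}).Reachable w₂ v₁ :=
      hr₂.mono (Gv_le_deleteEdge (Sym2.mem_mk_left _ _))
    by_cases hee : s(v₁, w₁) = s(v₂, w₂)
    · rw [hee] at hx1
      exact hδ.trans hx1.symm
    · obtain ⟨pw⟩ := hx1.symm
      have hv₂ : v₂ ∉ pw.support := by
        intro hmem
        have hvv : (T.G.deleteEdges {s(v₁, w₁)}).Reachable v₁ v₂ := ⟨pw.takeUntil v₂ hmem⟩
        exact tree_bridge_not_reachable T.isTree hw₁ (hvv.trans hα.symm)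
      have htr : (T.G.deleteEdges {s(v₂, w₂)}).Reachable v₁ (T.lab x) := by
        refine ⟨pw.transfer _ ?_⟩
        intro e' he'
        have h1 := pw.edges_subset_edgeSet he'
        rw [SimpleGraph.edgeSet_deleteEdges] at h1 ⊢
        refine ⟨h1.1, ?_⟩
        rw [Set.mem_singleton_iff]
        intro heq
        exact (walk_edges_not_mem pw hv₂ he') (heq ▸ Sym2.mem_mk_left _ _)
      exact hδ.trans htr

lemma exists_strong (T : WeakXTree X) (x₀ : X) (hE : T.IsEven) :
    ∃ P : Multiset (Finset (Finset X)), IsPartitionSystem P ∧ StronglyCompatible P ∧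
      systemSplits P = T.splits := by
  set r := T.lab x₀ with hr
  set W : Finset T.V := Finset.univ.filter (fun v => ¬ Even (T.G.dist r v)) with hW
  have hvlab : ∀ v ∈ W, ∀ x : X, T.lab x ≠ v := by
    intro v hv x hx
    rw [hW, Finset.mem_filter] at hv
    exact hv.2 (hx ▸ hE x₀ x)
  refine ⟨W.val.map T.piAt, ?_, ?_, ?_⟩
  · intro π hπ
    obtain ⟨v, hv, rfl⟩ := Multiset.mem_map.1 hπ
    exact ⟨isPartition_piAt v, two_le_card_piAt (hvlab v (by simpa using hv)) x₀⟩
  · intro π₁ h₁ π₂ h₂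
    obtain ⟨v₁, hv₁, rfl⟩ := Multiset.mem_map.1 h₁
    obtain ⟨v₂, hv₂, rfl⟩ := Multiset.mem_map.1 h₂
    by_cases heq : T.piAt v₁ = T.piAt v₂
    · exact Or.inl heq
    · exact Or.inr (strong_pair v₁ v₂ (fun h => heq (h ▸ rfl)))
  · rw [systemSplits, Multiset.bind_map]
    have h1 : ∀ v ∈ W.val, partitionSplits (T.piAt v) = (T.inc v).val.map T.splitOf :=
      fun v hv => partitionSplits_piAt (hvlab v (by simpa using hv))
    rw [Multiset.bind_congr h1, ← Multiset.map_bind, ← edge_partition r]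
    rfl

end WeakXTree

end Construction4
/-- for a compatible split system `Σ` the following are equivalent:
(i) `T_Σ` is even; (ii) there is a partition system `Π` with `Σ_Π = Σ`;
(iii) there is a strongly compatible partition system `Π_s` with `Σ_{Π_s} = Σ`. -/
theorem stmt_7 {X : Type} [Fintype X] [DecidableEq X] (hX : 2 ≤ Fintype.card X)
    (S : Multiset (Finset (Finset X))) (hS : IsSplitSystem S)
    (hcomp : CompatibleSystem S)
    (T : WeakXTree X) (hT : T.splits = S) :
    (T.IsEven ↔ ∃ P : Multiset (Finset (Finset X)),
        IsPartitionSystem P ∧ systemSplits P = S) ∧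
    (T.IsEven ↔ ∃ P : Multiset (Finset (Finset X)),
        IsPartitionSystem P ∧ StronglyCompatible P ∧ systemSplits P = S) := by
  obtain ⟨x₀⟩ : Nonempty X := Fintype.card_pos_iff.1 (by omega)
  have dir1 : T.IsEven → ∃ P : Multiset (Finset (Finset X)),
      IsPartitionSystem P ∧ StronglyCompatible P ∧ systemSplits P = S := by
    intro hE
    obtain ⟨P, h1, h2, h3⟩ := WeakXTree.exists_strong T x₀ hE
    exact ⟨P, h1, h2, h3.trans hT⟩
  have dir2 : ∀ P : Multiset (Finset (Finset X)), IsPartitionSystem P → systemSplits P = S →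
      T.IsEven := fun P h1 h2 => even_of_partition_system T P h1 (h2.trans hT.symm)
  refine ⟨⟨fun hE => ?_, fun h => ?_⟩, ⟨fun hE => dir1 hE, fun h => ?_⟩⟩
  · obtain ⟨P, h1, -, h3⟩ := dir1 hE
    exact ⟨P, h1, h3⟩
  · obtain ⟨P, h1, h3⟩ := h
    exact dir2 P h1 h3
  · obtain ⟨P, h1, -, h3⟩ := h
    exact dir2 P h1 h3
end EvenDirection
end

section
/- Let T be an even X-tree, let π be a partition of X displayed by T, and let F be a subset of edges of T that displays π. Then the weak X-tree T/F obtained from T by contracting every edge of F (labelling each resulting merged vertex by the union of the label sets of the vertices identified into it) is an even X-tree. -/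
open scoped Classical

variable {X : Type} [Fintype X] [DecidableEq X]

/-- The subgraph of `T` consisting of the edges in `F`. -/
def WeakXTree.edgeSubgraph (T : WeakXTree X) (F : Finset (Sym2 T.V)) :
    SimpleGraph T.V where
  Adj u w := T.G.Adj u w ∧ s(u, w) ∈ F
  symm := by
    constructor
    intro u w h
    refine ⟨h.1.symm, ?_⟩
    rw [Sym2.eq_swap]
    exact h.2
  loopless := by
    constructor
    intro u h
    exact h.1.ne rfl

/-- The graph `T/F` obtained from `T` by contracting every edge in `F`:
vertices are the components of the subgraph spanned by `F`, and two distinct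
classes are adjacent iff some representatives are adjacent in `T`. -/
def WeakXTree.contractedGraph (T : WeakXTree X) (F : Finset (Sym2 T.V)) :
    SimpleGraph (Quotient (T.edgeSubgraph F).reachableSetoid) where
  Adj c d := c ≠ d ∧ ∃ u w : T.V,
    Quotient.mk (T.edgeSubgraph F).reachableSetoid u = c ∧
    Quotient.mk (T.edgeSubgraph F).reachableSetoid w = d ∧ T.G.Adj u w
  symm := by
    constructor
    rintro c d ⟨hne, u, w, hu, hw, h⟩
    exact ⟨hne.symm, w, u, hw, hu, h.symm⟩
  loopless := by
    constructor
    rintro c ⟨hne, -⟩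
    exact hne rfl

/-- The labelling map of the contracted tree `T/F`. -/
def WeakXTree.contractedLab (T : WeakXTree X) (F : Finset (Sym2 T.V)) (x : X) :
    Quotient (T.edgeSubgraph F).reachableSetoid :=
  Quotient.mk (T.edgeSubgraph F).reachableSetoid (T.lab x)

namespace Stmt9Aux
open SimpleGraph

variable {X : Type} [Fintype X] [DecidableEq X] (T : WeakXTree X) (F : Finset (Sym2 T.V))

/-- abbreviation for the quotient map -/
def qk : T.V → Quotient (T.edgeSubgraph F).reachableSetoid :=
  Quotient.mk (T.edgeSubgraph F).reachableSetoid

lemma qk_eq {u w : T.V} : qk T F u = qk T F w ↔ (T.edgeSubgraph F).Reachable u w :=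
  ⟨fun h => Quotient.exact h, fun h => Quotient.sound h⟩

lemma subgraph_le : T.edgeSubgraph F ≤ T.G := fun _ _ h => h.1

/-- from an F-walk get a G-walk with all edges in F -/
lemma fwalk {u w : T.V} (h : qk T F u = qk T F w) :
    ∃ p : T.G.Walk u w, ∀ e ∈ p.edges, e ∈ F := by
  obtain ⟨p⟩ := (qk_eq T F).1 h
  refine ⟨p.map (Hom.ofLE (subgraph_le T F)), ?_⟩
  intro e he
  rw [Walk.edges_map, List.mem_map] at he
  obtain ⟨e', he', rfl⟩ := he
  have := p.edges_subset_edgeSet he'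
  induction e' with
  | _ a b =>
    rw [mem_edgeSet] at this
    simpa using this.2

/-- bridge property of trees -/
lemma bridge {u w : T.V} (h : T.G.Adj u w) (p : T.G.Walk u w) : s(u, w) ∈ p.edges := by
  have := (isAcyclic_iff_forall_adj_isBridge.1 T.isTree.IsAcyclic) h
  exact (isBridge_iff_adj_and_forall_walk_mem_edges.1 this) p

lemma mem_F_of_adj_of_qk_eq {u w : T.V} (h : T.G.Adj u w) (hq : qk T F u = qk T F w) :
    s(u, w) ∈ F := by
  obtain ⟨p, hp⟩ := fwalk T F hq
  exact hp _ (bridge T h p)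

lemma qk_eq_of_mem_F {u w : T.V} (h : T.G.Adj u w) (hF : s(u, w) ∈ F) :
    qk T F u = qk T F w :=
  (qk_eq T F).2 ⟨Walk.cons (⟨h, hF⟩ : (T.edgeSubgraph F).Adj u w) Walk.nil⟩


/-- uniqueness of the edge of T crossing between two given classes -/
lemma cross_unique {u w a b : T.V} (huw : T.G.Adj u w) (hab : T.G.Adj a b)
    (hau : qk T F a = qk T F u) (hbw : qk T F b = qk T F w)
    (hne : qk T F u ≠ qk T F w) : a = u ∧ b = w := by
  have hFuw : s(u, w) ∉ F := fun hf => hne (qk_eq_of_mem_F T F huw hf)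
  have hFab : s(a, b) ∉ F := fun hf => by
    have := qk_eq_of_mem_F T F hab hf
    exact hne (hau.symm.trans (this.trans hbw))
  have heq : s(a, b) = s(u, w) := by
    by_contra hnee
    obtain ⟨p1, hp1⟩ := fwalk T F hau.symm  -- u → a
    obtain ⟨p2, hp2⟩ := fwalk T F hbw       -- b → w
    have p : T.G.Walk u w := p1.append (Walk.cons hab p2)
    have hb := bridge T huw (p1.append (Walk.cons hab p2))
    rw [Walk.edges_append, Walk.edges_cons] at hb
    rcases List.mem_append.1 hb with h | h
    · exact hFuw (hp1 _ h)
    · rcases List.mem_cons.1 h with h | h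
      · exact hnee h.symm
      · exact hFuw (hp2 _ h)
  rcases Sym2.eq_iff.1 heq with ⟨rfl, rfl⟩ | ⟨rfl, rfl⟩
  · exact ⟨rfl, rfl⟩
  · exact absurd hau.symm hne

lemma proj_reachable {u w : T.V} (p : T.G.Walk u w) :
    (T.contractedGraph F).Reachable (qk T F u) (qk T F w) := by
  induction p with
  | nil => exact Reachable.refl _
  | @cons a b c h p ih =>
    by_cases hq : qk T F a = qk T F b
    · rw [hq]; exact ih
    · exact (SimpleGraph.Adj.reachable (show (T.contractedGraph F).Adj (qk T F a) (qk T F b) from ⟨hq, a, b, rfl, rfl, h⟩)).trans ih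

lemma lift_walk {c d : Quotient (T.edgeSubgraph F).reachableSetoid}
    (p : (T.contractedGraph F).Walk c d) : ∀ (u w : T.V), qk T F u = c → qk T F w = d →
    ∃ p' : T.G.Walk u w, ∀ e ∈ p'.edges,
      e ∈ F ∨ ∃ a b : T.V, e = s(a, b) ∧ s(qk T F a, qk T F b) ∈ p.edges := by
  induction p with
  | nil =>
    intro u w hu hw
    obtain ⟨p', hp'⟩ := fwalk T F (hu.trans hw.symm)
    exact ⟨p', fun e he => Or.inl (hp' e he)⟩
  | @cons c m d h p ih =>
    intro u w hu hw
    obtain ⟨hne, a, b, ha, hb, hab⟩ := h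
    obtain ⟨p1, hp1⟩ := fwalk T F (hu.trans ha.symm)
    obtain ⟨p2, hp2⟩ := ih b w hb hw
    refine ⟨p1.append (Walk.cons hab p2), ?_⟩
    intro e he
    rw [Walk.edges_append, List.mem_append, Walk.edges_cons, List.mem_cons] at he
    rcases he with he | he | he
    · exact Or.inl (hp1 e he)
    · refine Or.inr ⟨a, b, he, ?_⟩
      show _ ∈ s(c, m) :: p.edges
      rw [List.mem_cons]
      left
      rw [show qk T F a = c from ha, show qk T F b = m from hb]
    · rcases hp2 e he with h' | ⟨a', b', heq, hmem⟩
      · exact Or.inl h'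
      · refine Or.inr ⟨a', b', heq, ?_⟩
        show _ ∈ s(c, m) :: p.edges
        rw [List.mem_cons]
        exact Or.inr hmem

lemma contracted_acyclic : (T.contractedGraph F).IsAcyclic := by
  intro c p hp
  cases p with
  | nil => exact hp.not_of_nil
  | @cons _ m _ h q =>
    obtain ⟨hne, u, w, hu, hw, huw⟩ := h
    have hquw : qk T F u ≠ qk T F w := by
      intro h'
      exact hne ((show qk T F u = c from hu).symm.trans (h'.trans hw))
    have hFuw : s(u, w) ∉ F := fun hf => hquw (qk_eq_of_mem_F T F huw hf)
    have hnodup : s(c, m) ∉ q.edges := by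
      have := hp.edges_nodup
      change (s(c, m) :: q.edges).Nodup at this
      exact (List.nodup_cons.1 this).1
    obtain ⟨p', hp'⟩ := lift_walk T F q w u hw hu
    have hnot : s(u, w) ∉ p'.edges := by
      intro hmem
      rcases hp' _ hmem with h' | ⟨a, b, heq, hmem'⟩
      · exact hFuw h'
      · have : s(qk T F a, qk T F b) = s(c, m) := by
          rcases Sym2.eq_iff.1 heq.symm with ⟨h1, h2⟩ | ⟨h1, h2⟩
          · subst h1; subst h2
            rw [show qk T F a = c from hu, show qk T F b = m from hw]
          · subst h1; subst h2
            rw [show qk T F b = c from hu, show qk T F a = m from hw, Sym2.eq_swap]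
        rw [this] at hmem'
        exact hnodup hmem'
    have hb := bridge T huw p'.reverse
    rw [Walk.edges_reverse, List.mem_reverse] at hb
    exact hnot hb

lemma contracted_connected (hV : Nonempty T.V) : (T.contractedGraph F).Connected := by
  rw [connected_iff]
  constructor
  · intro c d
    induction c using Quotient.ind with
    | _ u =>
    induction d using Quotient.ind with
    | _ w =>
    obtain ⟨p⟩ := T.isTree.isConnected.preconnected u w
    exact proj_reachable T F p
  · exact ⟨Quotient.mk _ hV.some⟩


/-- number of edges in `E0` separating `r` from `v` -/
noncomputable def cnt (E0 : Finset (Sym2 T.V)) (r v : T.V) : ℕ :=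
  (E0.filter (fun e => ¬(T.G.deleteEdges {e}).Reachable r v)).card

lemma cnt_self (E0 : Finset (Sym2 T.V)) (r : T.V) : cnt T E0 r r = 0 := by
  unfold cnt
  rw [Finset.card_eq_zero, Finset.filter_eq_empty_iff]
  intro e _
  simp only [not_not]
  exact Reachable.refl r

lemma sep_iff_of_ne {v w : T.V} (hvw : T.G.Adj v w) {e : Sym2 T.V} (hne : e ≠ s(v, w))
    (r : T.V) : (T.G.deleteEdges {e}).Reachable r v ↔ (T.G.deleteEdges {e}).Reachable r w := by
  have hadj : (T.G.deleteEdges {e}).Adj v w := by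
    rw [deleteEdges_adj]
    exact ⟨hvw, fun h => hne (Set.mem_singleton_iff.1 h).symm⟩
  exact ⟨fun h => h.trans hadj.reachable, fun h => h.trans hadj.symm.reachable⟩

lemma reach_or {a b : T.V} {y z : T.V} (p : T.G.Walk y z) :
    (T.G.deleteEdges {s(a, b)}).Reachable y z ∨ (T.G.deleteEdges {s(a, b)}).Reachable y a ∨
      (T.G.deleteEdges {s(a, b)}).Reachable y b := by
  induction p with
  | nil => exact Or.inl (Reachable.refl _)
  | @cons y x z h p ih =>
    by_cases he : s(y, x) = s(a, b)
    · rcases Sym2.eq_iff.1 he with ⟨rfl, rfl⟩ | ⟨rfl, rfl⟩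
      · exact Or.inr (Or.inl (Reachable.refl _))
      · exact Or.inr (Or.inr (Reachable.refl _))
    · have hadj : (T.G.deleteEdges {s(a, b)}).Adj y x := by
        rw [deleteEdges_adj]
        exact ⟨h, by simpa using he⟩
      rcases ih with h' | h' | h'
      · exact Or.inl (hadj.reachable.trans h')
      · exact Or.inr (Or.inl (hadj.reachable.trans h'))
      · exact Or.inr (Or.inr (hadj.reachable.trans h'))

lemma sep_xor {v w : T.V} (hvw : T.G.Adj v w) (r : T.V) :
    ¬(T.G.deleteEdges {s(v, w)}).Reachable r v ↔ (T.G.deleteEdges {s(v, w)}).Reachable r w := by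
  have hbr : ¬(T.G.deleteEdges {s(v, w)}).Reachable v w := by
    have := (isAcyclic_iff_forall_adj_isBridge.1 T.isTree.IsAcyclic) hvw
    exact isBridge_iff.1 this
  constructor
  · intro hsep
    obtain ⟨p⟩ := T.isTree.isConnected.preconnected r v
    rcases reach_or T p with h' | h' | h'
    · exact absurd h' hsep
    · exact absurd h' hsep
    · exact h'
  · intro hr hv
    exact hbr (hv.symm.trans hr)

lemma cnt_flip {v w : T.V} (hvw : T.G.Adj v w) (E0 : Finset (Sym2 T.V)) (r : T.V) :
    (cnt T E0 r v : ZMod 2) = cnt T E0 r w + (if s(v, w) ∈ E0 then 1 else 0) := by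
  set e0 := s(v, w) with he0
  set A := E0.filter (fun e => ¬(T.G.deleteEdges {e}).Reachable r v) with hA
  set B := E0.filter (fun e => ¬(T.G.deleteEdges {e}).Reachable r w) with hB
  have herase : A.erase e0 = B.erase e0 := by
    ext e
    simp only [Finset.mem_erase, hA, hB, Finset.mem_filter]
    constructor
    · rintro ⟨hne, he, hsep⟩
      exact ⟨hne, he, fun h => hsep ((sep_iff_of_ne T hvw hne r).2 h)⟩
    · rintro ⟨hne, he, hsep⟩
      exact ⟨hne, he, fun h => hsep ((sep_iff_of_ne T hvw hne r).1 h)⟩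
  by_cases hmem : e0 ∈ E0
  · rw [if_pos hmem]
    by_cases hsep : (T.G.deleteEdges {e0}).Reachable r v
    · -- not separated from v, separated from w
      have hsw : ¬(T.G.deleteEdges {e0}).Reachable r w := by
        intro h
        exact absurd ((sep_xor T hvw r).2 h) (not_not.2 hsep)
      have hv0 : e0 ∉ A := by
        simp only [hA, Finset.mem_filter, not_and, not_not]
        intro _; exact hsep
      have hw0 : e0 ∈ B := by
        simp only [hB, Finset.mem_filter]
        exact ⟨hmem, hsw⟩
      have h1 : A = B.erase e0 := by
        rw [← herase, Finset.erase_eq_of_notMem hv0]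
      have h2 : (B.erase e0).card + 1 = B.card := Finset.card_erase_add_one hw0
      show ((A.card : ZMod 2)) = B.card + 1
      rw [h1, ← h2]
      push_cast
      rw [add_assoc, show ((1 : ZMod 2) + 1) = 0 from rfl, add_zero]
    · -- separated from v, not separated from w
      have hsw : (T.G.deleteEdges {e0}).Reachable r w := (sep_xor T hvw r).1 hsep
      have hv0 : e0 ∈ A := by
        simp only [hA, Finset.mem_filter]
        exact ⟨hmem, hsep⟩
      have hw0 : e0 ∉ B := by
        simp only [hB, Finset.mem_filter, not_and, not_not]
        intro _; exact hsw
      have h1 : B = A.erase e0 := by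
        rw [herase, Finset.erase_eq_of_notMem hw0]
      have h2 : (A.erase e0).card + 1 = A.card := Finset.card_erase_add_one hv0
      show ((A.card : ZMod 2)) = B.card + 1
      rw [h1, ← h2]
      push_cast
      ring
  · rw [if_neg hmem, add_zero]
    have hv0 : e0 ∉ A := fun h => hmem (Finset.mem_filter.1 h).1
    have hw0 : e0 ∉ B := fun h => hmem (Finset.mem_filter.1 h).1
    show ((A.card : ZMod 2)) = B.card
    rw [show A = B by
      rw [← Finset.erase_eq_of_notMem hv0, ← Finset.erase_eq_of_notMem hw0, herase]]


lemma cnt_edge_walk (r : T.V) {a b : T.V} (p : T.G.Walk a b) :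
    (cnt T T.G.edgeFinset r a : ZMod 2) + p.length = cnt T T.G.edgeFinset r b := by
  induction p with
  | nil => simp
  | @cons a x b h p ih =>
    have h1 := cnt_flip T h T.G.edgeFinset r
    rw [if_pos (mem_edgeFinset.2 h)] at h1
    rw [Walk.length_cons]
    push_cast
    rw [h1, ← ih]
    ring_nf
    rw [show ((2:ZMod 2)) = 0 from rfl, zero_add]

lemma cnt_dist (r v : T.V) : (cnt T T.G.edgeFinset r v : ZMod 2) = (T.G.dist r v : ZMod 2) := by
  obtain ⟨p, hp⟩ := Connected.exists_walk_length_eq_dist T.isTree.isConnected r v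
  have h1 := cnt_edge_walk T r p
  rw [cnt_self] at h1
  rw [← hp, ← h1]
  push_cast
  ring

lemma cnt_qk (r : T.V) {u w : T.V} (h : qk T F u = qk T F w) :
    (cnt T (T.G.edgeFinset \ F) r u : ZMod 2) = cnt T (T.G.edgeFinset \ F) r w := by
  obtain ⟨p⟩ := (qk_eq T F).1 h
  clear h
  induction p with
  | nil => rfl
  | @cons a x b h p ih =>
    have h1 := cnt_flip T h.1 (T.G.edgeFinset \ F) r
    rw [if_neg (fun hmem => (Finset.mem_sdiff.1 hmem).2 h.2), add_zero] at h1
    rw [h1, ih]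

/-- parity colouring of the contracted graph -/
noncomputable def chi (r : T.V) : Quotient (T.edgeSubgraph F).reachableSetoid → ZMod 2 :=
  Quotient.lift (fun v => (cnt T (T.G.edgeFinset \ F) r v : ZMod 2))
    (fun _ _ hab => cnt_qk T F r (Quotient.sound hab))

lemma chi_qk (r v : T.V) : chi T F r (qk T F v) = (cnt T (T.G.edgeFinset \ F) r v : ZMod 2) :=
  rfl

lemma chi_flip (r : T.V) {c d} (h : (T.contractedGraph F).Adj c d) :
    chi T F r c = chi T F r d + 1 := by
  obtain ⟨hne, u, w, hu, hw, huw⟩ := h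
  have hqne : qk T F u ≠ qk T F w := by
    intro h'
    exact hne ((show qk T F u = c from hu).symm.trans (h'.trans hw))
  have hF : s(u, w) ∉ F := fun hf => hqne (qk_eq_of_mem_F T F huw hf)
  have h1 := cnt_flip T huw (T.G.edgeFinset \ F) r
  rw [if_pos (Finset.mem_sdiff.2 ⟨mem_edgeFinset.2 huw, hF⟩)] at h1
  subst hu; subst hw
  exact h1

lemma chi_walk (r : T.V) {c d} (p : (T.contractedGraph F).Walk c d) :
    (p.length : ZMod 2) = chi T F r c + chi T F r d := by
  induction p with
  | nil => simp [CharTwo.add_self_eq_zero]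
  | @cons c m d h p ih =>
    rw [Walk.length_cons]
    push_cast
    rw [ih, chi_flip T F r h]
    ring

lemma even_dist_of_chi_eq (hV : Nonempty T.V) {c d} (r : T.V)
    (h : chi T F r c = chi T F r d) : Even ((T.contractedGraph F).dist c d) := by
  obtain ⟨p, hp⟩ := Connected.exists_walk_length_eq_dist (contracted_connected T F hV) c d
  rw [← hp, even_iff_two_dvd, ← ZMod.natCast_eq_zero_iff, chi_walk T F r p, h,
    CharTwo.add_self_eq_zero]


lemma sep_iff_split {e : Sym2 T.V} {A : Finset X} (hsplit : T.splitOf e = {A, Aᶜ}) (x y : X) :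
    (¬(T.G.deleteEdges {e}).Reachable (T.lab x) (T.lab y)) ↔ ¬((x ∈ A) ↔ (y ∈ A)) := by
  set R : Finset X := Finset.univ.filter
    (fun z : X => (T.G.deleteEdges {e}).Reachable (T.lab x) (T.lab z)) with hRdef
  have hR : R ∈ ({A, Aᶜ} : Finset (Finset X)) := by
    rw [← hsplit]
    exact Finset.mem_image_of_mem _ (Finset.mem_univ (T.lab x))
  have hx : x ∈ R := Finset.mem_filter.2 ⟨Finset.mem_univ _, Reachable.refl _⟩
  have hy : y ∈ R ↔ (T.G.deleteEdges {e}).Reachable (T.lab x) (T.lab y) := by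
    simp [hRdef]
  rcases Finset.mem_insert.1 hR with hRA | hRA
  · subst hRA
    have hxA : x ∈ R := hx
    constructor
    · intro hsep
      intro hiff
      exact hsep (hy.1 (hiff.1 hxA))
    · intro hiff hreach
      exact hiff ⟨fun _ => hy.2 hreach, fun _ => hxA⟩
  · rw [Finset.mem_singleton] at hRA
    rw [hRA] at hx hy
    have hxA : x ∉ A := Finset.mem_compl.1 hx
    constructor
    · intro hsep hiff
      have hyA : y ∉ A := fun hyA' => hxA (hiff.2 hyA')
      exact hsep (hy.1 (Finset.mem_compl.2 hyA))
    · intro hiff hreach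
      have hyc : y ∈ Aᶜ := hy.2 hreach
      exact hiff ⟨fun hxA' => absurd hxA' hxA,
        fun hyA => absurd hyA (Finset.mem_compl.1 hyc)⟩

lemma cnt_F_even {π : Finset (Finset X)} (hπ : IsPartition π) (hF : T.Displays F π)
    (x y : X) : Even (cnt T F (T.lab x) (T.lab y)) := by
  obtain ⟨hsub, ξ, hbij, hsplit⟩ := hF
  set P : Sym2 T.V → Prop :=
    fun e => ¬(T.G.deleteEdges {e}).Reachable (T.lab x) (T.lab y) with hPdef
  have himg : F.filter P =
      (π.filter (fun A => ¬((x ∈ A) ↔ (y ∈ A)))).image ξ := by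
    ext e
    simp only [Finset.mem_filter, Finset.mem_image]
    constructor
    · rintro ⟨heF, heP⟩
      obtain ⟨A, hA, rfl⟩ := hbij.surjOn heF
      have hAπ : A ∈ π := hA
      exact ⟨A, ⟨hAπ, (sep_iff_split T (hsplit A hAπ) x y).1 heP⟩, rfl⟩
    · rintro ⟨A, ⟨hAπ, hAQ⟩, rfl⟩
      exact ⟨hbij.mapsTo hAπ, (sep_iff_split T (hsplit A hAπ) x y).2 hAQ⟩
  have hcard : cnt T F (T.lab x) (T.lab y) =
      (π.filter (fun A => ¬((x ∈ A) ↔ (y ∈ A)))).card := by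
    show (F.filter P).card = _
    rw [himg]
    exact Finset.card_image_of_injOn
      (hbij.injOn.mono (Finset.coe_subset.2 (Finset.filter_subset _ _)))
  rw [hcard]
  obtain ⟨Ax, ⟨hAxπ, hxAx⟩, huX⟩ := hπ.2 x
  obtain ⟨Ay, ⟨hAyπ, hyAy⟩, huY⟩ := hπ.2 y
  by_cases hxy : Ax = Ay
  · have hempty : π.filter (fun A => ¬((x ∈ A) ↔ (y ∈ A))) = ∅ := by
      rw [Finset.filter_eq_empty_iff]
      intro A hA hQA
      have hq := not_iff.1 hQA
      by_cases hxA : x ∈ A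
      · have hAAx : A = Ax := huX A ⟨hA, hxA⟩
        have hyA : y ∈ A := by rw [hAAx, hxy]; exact hyAy
        exact (hq.2 hyA) hxA
      · have hyA : y ∈ A := hq.1 hxA
        have hAAy : A = Ay := huY A ⟨hA, hyA⟩
        exact hxA (by rw [hAAy, ← hxy]; exact hxAx)
    rw [hempty]
    simp
  · have hpair : π.filter (fun A => ¬((x ∈ A) ↔ (y ∈ A))) = {Ax, Ay} := by
      ext A
      rw [Finset.mem_filter, Finset.mem_insert, Finset.mem_singleton]
      constructor
      · rintro ⟨hA, hQA⟩
        have hq := not_iff.1 hQA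
        by_cases hxA : x ∈ A
        · exact Or.inl (huX A ⟨hA, hxA⟩)
        · exact Or.inr (huY A ⟨hA, hq.1 hxA⟩)
      · rintro (rfl | rfl)
        · exact ⟨hAxπ, not_iff.2 ⟨fun hxA => absurd hxAx hxA,
            fun hyA => absurd (huY A ⟨hAxπ, hyA⟩) hxy⟩⟩
        · exact ⟨hAyπ, not_iff.2 ⟨fun _ => hyAy,
            fun _ hxA => hxy ((huX A ⟨hAyπ, hxA⟩).symm)⟩⟩
    rw [hpair, Finset.card_insert_of_notMem (by simpa using hxy), Finset.card_singleton]
    exact Even.add_self 1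

lemma cnt_sdiff (hFE : F ⊆ T.G.edgeFinset) (r v : T.V) :
    cnt T (T.G.edgeFinset \ F) r v + cnt T F r v = cnt T T.G.edgeFinset r v := by
  show ((T.G.edgeFinset \ F).filter _).card + (F.filter _).card = _
  have h1 : (T.G.edgeFinset \ F).filter
      (fun e => ¬(T.G.deleteEdges {e}).Reachable r v) =
      T.G.edgeFinset.filter (fun e => ¬(T.G.deleteEdges {e}).Reachable r v) \
      F.filter (fun e => ¬(T.G.deleteEdges {e}).Reachable r v) := by
    ext e
    simp only [Finset.mem_filter, Finset.mem_sdiff]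
    tauto
  rw [h1]
  exact Finset.card_sdiff_add_card_eq_card
    (Finset.filter_subset_filter _ hFE)

lemma closer_unique {u m b1 b2 : T.V} (h1 : T.G.Adj m b1) (h2 : T.G.Adj m b2)
    (hd1 : T.G.dist u b1 + 1 = T.G.dist u m) (hd2 : T.G.dist u b2 + 1 = T.G.dist u m) :
    b1 = b2 := by
  by_contra hne
  obtain ⟨p1, hp1⟩ := Connected.exists_walk_length_eq_dist T.isTree.isConnected u b1
  obtain ⟨p2, hp2⟩ := Connected.exists_walk_length_eq_dist T.isTree.isConnected u b2
  have hm1 : m ∉ p1.support := by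
    intro hmem
    have ha := Walk.length_takeUntil_le p1 hmem
    have hb := dist_le (p1.takeUntil m hmem)
    omega
  have hm2 : m ∉ p2.support := by
    intro hmem
    have ha := Walk.length_takeUntil_le p2 hmem
    have hb := dist_le (p2.takeUntil m hmem)
    omega
  have hbr := bridge T h1.symm
    ((p1.reverse.append p2).append (Walk.cons h2.symm Walk.nil))
  rw [Walk.edges_append, Walk.edges_append, Walk.edges_reverse, Walk.edges_cons,
    Walk.edges_nil, List.mem_append, List.mem_append, List.mem_reverse] at hbr
  rcases hbr with (hbr | hbr) | hbr
  · exact hm1 (Walk.snd_mem_support_of_mem_edges p1 hbr)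
  · exact hm2 (Walk.snd_mem_support_of_mem_edges p2 hbr)
  · rw [List.mem_singleton] at hbr
    rcases Sym2.eq_iff.1 hbr with ⟨hb, -⟩ | ⟨hb, hm⟩
    · exact hne hb
    · subst hm
      exact h2.ne rfl


end Stmt9Aux


/-- if `T` is an even X-tree and `F` displays a partition `π` of
`X`, then the contraction `T/F` (with each merged vertex labelled by the union
of the labels identified into it) is again an even X-tree: it is a tree, every
degree-one vertex is labelled, and all distances between labelled vertices are
even. -/
theorem stmt_9 {X : Type} [Fintype X] [DecidableEq X] (hX : 2 ≤ Fintype.card X)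
    (T : WeakXTree X) (hTe : T.IsEven)
    (π : Finset (Finset X)) (hπ : IsPartition π ∧ 2 ≤ π.card)
    (F : Finset (Sym2 T.V)) (hF : T.Displays F π) :
    (T.contractedGraph F).IsTree ∧
    (∀ c, (∃! d, (T.contractedGraph F).Adj c d) →
      c ∈ Set.range (T.contractedLab F)) ∧
    (∀ x y : X,
      Even ((T.contractedGraph F).dist (T.contractedLab F x) (T.contractedLab F y))) := by
  classical
  have hXne : Nonempty X := Fintype.card_pos_iff.1 (lt_of_lt_of_le (by norm_num) hX)
  obtain ⟨x₀⟩ := hXne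
  have hV : Nonempty T.V := ⟨T.lab x₀⟩
  have hFE : F ⊆ T.G.edgeFinset := fun e he => SimpleGraph.mem_edgeFinset.2 (hF.1 he)
  refine ⟨⟨Stmt9Aux.contracted_connected T F hV, Stmt9Aux.contracted_acyclic T F⟩, ?_, ?_⟩
  · -- leaves of the contraction are labelled
    intro c hc
    obtain ⟨d, hadj, huniq⟩ := hc
    obtain ⟨hne, u, w, hu, hw, huw⟩ := hadj
    have hu' : Stmt9Aux.qk T F u = c := hu
    have hw' : Stmt9Aux.qk T F w = d := hw
    have hquw : Stmt9Aux.qk T F u ≠ Stmt9Aux.qk T F w := by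
      intro h; exact hne (hu'.symm.trans (h.trans hw'))
    have hcross : ∀ a b : T.V, T.G.Adj a b → Stmt9Aux.qk T F a = c →
        Stmt9Aux.qk T F b ≠ c → a = u ∧ b = w := by
      intro a b hab ha hbc
      have hadj' : (T.contractedGraph F).Adj c (Stmt9Aux.qk T F b) :=
        ⟨fun h => hbc h.symm, a, b, ha, rfl, hab⟩
      have hbd : Stmt9Aux.qk T F b = d := huniq _ hadj'
      exact Stmt9Aux.cross_unique T F huw hab (ha.trans hu'.symm) (hbd.trans hw'.symm) hquw
    obtain ⟨m, hmC, hmax⟩ := Finset.exists_max_image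
      (Finset.univ.filter (fun a : T.V => Stmt9Aux.qk T F a = c))
      (fun a => T.G.dist u a) ⟨u, Finset.mem_filter.2 ⟨Finset.mem_univ _, hu'⟩⟩
    have hqm : Stmt9Aux.qk T F m = c := (Finset.mem_filter.1 hmC).2
    have hmax' : ∀ b : T.V, Stmt9Aux.qk T F b = c → T.G.dist u b ≤ T.G.dist u m :=
      fun b hb => hmax b (Finset.mem_filter.2 ⟨Finset.mem_univ _, hb⟩)
    have hcase : ∀ b : T.V, T.G.Adj m b →
        (m = u ∧ b = w) ∨ T.G.dist u b + 1 = T.G.dist u m := by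
      intro b hb
      by_cases hbc : Stmt9Aux.qk T F b = c
      · right
        have hle := hmax' b hbc
        have htri : T.G.dist u m ≤ T.G.dist u b + 1 := by
          have h1 := SimpleGraph.Connected.dist_triangle T.isTree.isConnected
            (u := u) (v := b) (w := m)
          rw [show T.G.dist b m = 1 from SimpleGraph.dist_eq_one_iff_adj.2 hb.symm] at h1
          exact h1
        have hneq : T.G.dist u b ≠ T.G.dist u m := by
          intro heq
          have h1 := Stmt9Aux.cnt_flip T hb T.G.edgeFinset u
          rw [if_pos (SimpleGraph.mem_edgeFinset.2 hb)] at h1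
          rw [Stmt9Aux.cnt_dist, Stmt9Aux.cnt_dist, heq] at h1
          exact one_ne_zero (left_eq_add.1 h1)
        omega
      · exact Or.inl (hcross m b hb hqm hbc)
    have hpair : ∀ b1 b2 : T.V, T.G.Adj m b1 → T.G.Adj m b2 → b1 = b2 := by
      intro b1 b2 hb1 hb2
      rcases hcase b1 hb1 with ⟨hmu, hb1w⟩ | hd1
      · rcases hcase b2 hb2 with ⟨hmu2, hb2w⟩ | hd2
        · rw [hb1w, hb2w]
        · subst hmu
          rw [SimpleGraph.dist_self] at hd2
          omega
      · rcases hcase b2 hb2 with ⟨hmu, hb2w⟩ | hd2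
        · subst hmu
          rw [SimpleGraph.dist_self] at hd1
          omega
        · exact Stmt9Aux.closer_unique T hb1 hb2 hd1 hd2
    have hex : ∃ b : T.V, T.G.Adj m b := by
      have hwm : w ≠ m := by
        intro h
        rw [h] at hw'
        exact hne (hqm.symm.trans hw')
      obtain ⟨p0⟩ := T.isTree.isConnected.preconnected m w
      cases p0 with
      | nil => exact absurd rfl hwm
      | cons h _ => exact ⟨_, h⟩
    obtain ⟨b0, hb0⟩ := hex
    obtain ⟨xx, hxx⟩ := T.leaf_labelled m ⟨b0, hb0, fun z hz => hpair z b0 hz hb0⟩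
    exact ⟨xx, by show Stmt9Aux.qk T F (T.lab xx) = c; rw [hxx]; exact hqm⟩
  · -- parity of distances
    intro x y
    apply Stmt9Aux.even_dist_of_chi_eq T F hV (T.lab x)
    show (Stmt9Aux.cnt T (T.G.edgeFinset \ F) (T.lab x) (T.lab x) : ZMod 2) =
      (Stmt9Aux.cnt T (T.G.edgeFinset \ F) (T.lab x) (T.lab y) : ZMod 2)
    rw [Stmt9Aux.cnt_self]
    have hsd := Stmt9Aux.cnt_sdiff T F hFE (T.lab x) (T.lab y)
    have hE0 : (Stmt9Aux.cnt T T.G.edgeFinset (T.lab x) (T.lab y) : ZMod 2) = 0 := by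
      rw [Stmt9Aux.cnt_dist]
      exact (ZMod.natCast_eq_zero_iff _ 2).2 (even_iff_two_dvd.1 (hTe x y))
    have hF0 : (Stmt9Aux.cnt T F (T.lab x) (T.lab y) : ZMod 2) = 0 :=
      (ZMod.natCast_eq_zero_iff _ 2).2
        (even_iff_two_dvd.1 (Stmt9Aux.cnt_F_even T F hπ.1 hF x y))
    have hfin : ((Stmt9Aux.cnt T (T.G.edgeFinset \ F) (T.lab x) (T.lab y) : ℕ) : ZMod 2) +
        ((Stmt9Aux.cnt T F (T.lab x) (T.lab y) : ℕ) : ZMod 2) = 0 := by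
      rw [← Nat.cast_add, hsd]
      exact hE0
    rw [hF0, add_zero] at hfin
    exact hfin.symm
end

section
/- Let T be a finite tree with at least two leaves, and suppose the vertex set of T is 2-coloured with colours 'odd' and 'even' (so adjacent vertices receive different colours). Then the number of vertices coloured odd is at least the number of interior (non-leaf) vertices coloured even plus one. -/
open scoped Classical

variable {X : Type} [Fintype X] [DecidableEq X]

section Aux

variable {V : Type} {G : SimpleGraph V}

open SimpleGraph

lemma walk_parity (c : V → Bool) (hc : ∀ u v : V, G.Adj u v → c u ≠ c v)
    {a b : V} (p : G.Walk a b) : (c a = c b) ↔ Even p.length := by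
  induction p with
  | nil => simp
  | @cons a a' b h p ih =>
    have h2 := hc _ _ h
    rw [SimpleGraph.Walk.length_cons, Nat.even_add_one, ← ih]
    cases hca : c a <;> cases hca' : c a' <;> cases hcb : c b <;> simp_all

lemma adj_dist (hT : G.IsTree) (c : V → Bool) (hc : ∀ u v : V, G.Adj u v → c u ≠ c v)
    {r u v : V} (h : G.Adj u v) :
    G.dist u r = G.dist v r + 1 ∨ G.dist v r = G.dist u r + 1 := by
  have hconn := hT.isConnected
  obtain ⟨p, hp⟩ := hconn.exists_walk_length_eq_dist u r
  obtain ⟨q, hq⟩ := hconn.exists_walk_length_eq_dist v r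
  have h1 : G.dist u r ≤ G.dist u v + G.dist v r := hconn.dist_triangle
  have h1' : G.dist u v ≤ 1 := by
    simpa using G.dist_le (SimpleGraph.Walk.cons h SimpleGraph.Walk.nil)
  have h2 : G.dist v r ≤ G.dist v u + G.dist u r := hconn.dist_triangle
  have h2' : G.dist v u ≤ 1 := by
    simpa using G.dist_le (SimpleGraph.Walk.cons h.symm SimpleGraph.Walk.nil)
  have hne : G.dist u r ≠ G.dist v r := by
    intro heq
    have e1 := walk_parity c hc p
    have e2 := walk_parity c hc q
    rw [hp] at e1
    rw [hq] at e2
    rw [heq] at e1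
    have h3 := hc _ _ h
    cases hcu : c u <;> cases hcv : c v <;> cases hcr : c r <;>
      simp_all [Nat.even_iff, Nat.odd_iff]
  omega

lemma closer_unique (hT : G.IsTree) {r v u1 u2 : V} (h1 : G.Adj v u1) (h2 : G.Adj v u2)
    (d1 : G.dist u1 r < G.dist v r) (d2 : G.dist u2 r < G.dist v r) : u1 = u2 := by
  have hconn := hT.isConnected
  obtain ⟨w1, hw1⟩ := hconn.exists_walk_length_eq_dist u1 r
  obtain ⟨w2, hw2⟩ := hconn.exists_walk_length_eq_dist u2 r
  have notmem : ∀ (u : V) (w : G.Walk u r), w.length = G.dist u r →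
      G.dist u r < G.dist v r → v ∉ w.bypass.support := by
    intro u w hw hlt hv
    have hd : G.dist v r ≤ (w.bypass.dropUntil v hv).length := G.dist_le _
    have hlen : (w.bypass.dropUntil v hv).length ≤ w.bypass.length :=
      SimpleGraph.Walk.length_dropUntil_le _ hv
    have hb : w.bypass.length ≤ w.length := SimpleGraph.Walk.length_bypass_le _
    omega
  let P1 : G.Path v r := ⟨SimpleGraph.Walk.cons h1 w1.bypass,
    (SimpleGraph.Walk.cons_isPath_iff _ _).2 ⟨w1.bypass_isPath, notmem _ _ hw1 d1⟩⟩
  let P2 : G.Path v r := ⟨SimpleGraph.Walk.cons h2 w2.bypass,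
    (SimpleGraph.Walk.cons_isPath_iff _ _).2 ⟨w2.bypass_isPath, notmem _ _ hw2 d2⟩⟩
  have heq : P1 = P2 := hT.IsAcyclic.path_unique P1 P2
  have heq' : (P1 : G.Walk v r) = (P2 : G.Walk v r) := congrArg Subtype.val heq
  have := congrArg (fun w : G.Walk v r => w.getVert 1) heq'
  simpa [P1, P2, SimpleGraph.Walk.getVert_cons _ _ (one_ne_zero : (1:ℕ) ≠ 0)] using this

end Aux

/-- in any 2-coloured finite tree with at least two leaves, the
number of vertices coloured odd (`true`) is at least the number of interior
vertices coloured even (`false`) plus one. -/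
theorem stmt_11 {V : Type} [Fintype V] [DecidableEq V] (G : SimpleGraph V)
    (hT : G.IsTree)
    (hleaves : ∃ u v : V, u ≠ v ∧ (∃! w : V, G.Adj u w) ∧ (∃! w : V, G.Adj v w))
    (c : V → Bool) (hc : ∀ u v : V, G.Adj u v → c u ≠ c v) :
    (Finset.univ.filter (fun v : V =>
        ¬ (∃! w : V, G.Adj v w) ∧ c v = false)).card + 1 ≤
      (Finset.univ.filter (fun v : V => c v = true)).card := by
    classical
  obtain ⟨a, b, hab, _, _⟩ := hleaves
  have hconn := hT.isConnected
  have hexadj : ∀ v : V, ∃ w, G.Adj v w := by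
    intro v
    have hne : ∃ w, w ≠ v := by
      rcases eq_or_ne a v with rfl | h
      · exact ⟨b, fun hb => hab hb.symm⟩
      · exact ⟨a, h⟩
    obtain ⟨w, hw⟩ := hne
    obtain ⟨p⟩ := hconn v w
    cases p with
    | nil => exact absurd rfl hw
    | cons h _ => exact ⟨_, h⟩
  obtain ⟨w0, hw0⟩ := hexadj a
  set r := if c a = true then a else w0 with hr
  have hrodd : c r = true := by
    have h3 := hc _ _ hw0
    by_cases h : c a = true
    · simp [hr, h]
    · simp only [hr, h, if_false]
      cases hca : c a <;> cases hcw : c w0 <;> simp_all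
  set S := Finset.univ.filter (fun v : V =>
      ¬ (∃! w : V, G.Adj v w) ∧ c v = false) with hS
  set O := Finset.univ.filter (fun v : V => c v = true) with hO
  have hrO : r ∈ O := by simp [hO, hrodd]
  have hchild : ∀ v ∈ S, ∃ u, G.Adj v u ∧ G.dist u r = G.dist v r + 1 := by
    intro v hv
    rw [hS, Finset.mem_filter] at hv
    obtain ⟨-, hint, hvfalse⟩ := hv
    obtain ⟨w1, hw1⟩ := hexadj v
    have hex2 : ∃ w2, G.Adj v w2 ∧ w2 ≠ w1 := by
      by_contra hcon
      push_neg at hcon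
      exact hint ⟨w1, hw1, fun y hy => hcon y hy⟩
    obtain ⟨w2, hw2, hne⟩ := hex2
    rcases adj_dist hT c hc (r := r) hw1 with hd1 | hd1
    · rcases adj_dist hT c hc (r := r) hw2 with hd2 | hd2
      · exact absurd (closer_unique hT (r := r) hw1 hw2 (by omega) (by omega)).symm hne
      · exact ⟨w2, hw2, hd2⟩
    · exact ⟨w1, hw1, hd1⟩
  choose! f hfadj hfdist using hchild
  have hmap : ∀ v ∈ S, f v ∈ O.erase r := by
    intro v hv
    have hadj := hfadj v hv
    have hd := hfdist v hv
    have hvfalse : c v = false := by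
      rw [hS, Finset.mem_filter] at hv; exact hv.2.2
    rw [Finset.mem_erase]
    constructor
    · intro hfr
      rw [hfr] at hd
      simp [SimpleGraph.dist_self] at hd
    · have h3 := hc _ _ hadj
      rw [hO, Finset.mem_filter]
      refine ⟨Finset.mem_univ _, ?_⟩
      cases hcf : c (f v) <;> simp_all
  have hinj : Set.InjOn f ↑S := by
    intro v1 h1 v2 h2 heq
    rw [Finset.mem_coe] at h1 h2
    have a1 := hfadj v1 h1
    have a2 := hfadj v2 h2
    have e1 := hfdist v1 h1
    have e2 := hfdist v2 h2
    rw [heq] at a1 e1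
    exact closer_unique hT (r := r) a1.symm a2.symm (by omega) (by omega)
  have hcard : S.card ≤ (O.erase r).card :=
    Finset.card_le_card_of_injOn f hmap hinj
  have hce : (O.erase r).card = O.card - 1 := Finset.card_erase_of_mem hrO
  have hpos : 1 ≤ O.card := Finset.card_pos.mpr ⟨r, hrO⟩
  omega
end

section
/- Let Π be a hierarchical partition system on X. Then there is a vertex ρ of the weak X-tree T_Π such that d_{T_Π}(ρ, u) = |Π| for every leaf u of T_Π, where |Π| is the total multiset size of Π. -/
open scoped Classical

variable {X : Type} [Fintype X] [DecidableEq X]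

/-- A partition system is hierarchical if the collection of all parts of its
partitions is a hierarchy: any two parts are disjoint or nested. -/
def Hierarchical (P : Multiset (Finset (Finset X))) : Prop :=
  ∀ π₁ ∈ P, ∀ π₂ ∈ P, ∀ A ∈ π₁, ∀ B ∈ π₂,
    A ∩ B = ∅ ∨ A ∩ B = A ∨ A ∩ B = B

namespace Stmt16

open SimpleGraph

variable {X : Type} [Fintype X] [DecidableEq X]

/-- The set of labels on the `v`-side of the edge `e`. -/
noncomputable def side (T : WeakXTree X) (v : T.V) (e : Sym2 T.V) : Finset X :=
  Finset.univ.filter (fun x : X => (T.G.deleteEdges {e}).Reachable v (T.lab x))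

lemma mem_side {T : WeakXTree X} {v : T.V} {e : Sym2 T.V} {x : X} :
    x ∈ side T v e ↔ (T.G.deleteEdges {e}).Reachable v (T.lab x) := by
  simp [side]

/-- The multiset of `v`-sides over all edges. -/
noncomputable def M (T : WeakXTree X) (v : T.V) : Multiset (Finset X) :=
  T.G.edgeFinset.val.map (side T v)

/-- The multiset of complements of parts over all partitions. -/
def Q (P : Multiset (Finset (Finset X))) : Multiset (Finset X) :=
  P.bind (fun π => π.val.map (fun A => Aᶜ))

lemma exists_adj {T : WeakXTree X} {e : Sym2 T.V} (he : e ∈ T.G.edgeFinset) :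
    ∃ a b : T.V, T.G.Adj a b ∧ e = s(a, b) := by
  rw [SimpleGraph.mem_edgeFinset] at he
  induction e using Sym2.ind with
  | _ a b => exact ⟨a, b, he, rfl⟩

lemma reach_or_aux {T : WeakXTree X} {a b : T.V} (hab : T.G.Adj a b) {u w : T.V}
    (W : T.G.Walk u w) :
    (T.G.deleteEdges {s(a, b)}).Reachable u w ∨
      (T.G.deleteEdges {s(a, b)}).Reachable u a ∨
      (T.G.deleteEdges {s(a, b)}).Reachable u b := by
  induction W with
  | nil => exact Or.inl (Reachable.refl _)
  | @cons u c _ h p ih =>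
    by_cases hec : s(u, c) = s(a, b)
    · rw [Sym2.eq_iff] at hec
      rcases hec with ⟨rfl, rfl⟩ | ⟨rfl, rfl⟩
      · exact Or.inr (Or.inl (Reachable.refl _))
      · exact Or.inr (Or.inr (Reachable.refl _))
    · have hadj : (T.G.deleteEdges {s(a, b)}).Adj u c := by
        simp [SimpleGraph.deleteEdges_adj, h, hec]
      rcases ih with h1 | h1 | h1
      · exact Or.inl (hadj.reachable.trans h1)
      · exact Or.inr (Or.inl (hadj.reachable.trans h1))
      · exact Or.inr (Or.inr (hadj.reachable.trans h1))

lemma reach_or {T : WeakXTree X} {a b : T.V} (hab : T.G.Adj a b) (u : T.V) :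
    (T.G.deleteEdges {s(a, b)}).Reachable u a ∨
      (T.G.deleteEdges {s(a, b)}).Reachable u b := by
  obtain ⟨W⟩ := (T.isTree.isConnected u a : T.G.Reachable u a)
  rcases reach_or_aux hab W with h | h | h
  · exact Or.inl h
  · exact Or.inl h
  · exact Or.inr h

lemma not_reach_del {T : WeakXTree X} {a b : T.V} (hab : T.G.Adj a b) :
    ¬ (T.G.deleteEdges {s(a, b)}).Reachable a b := by
  have hb : T.G.IsBridge s(a, b) :=
    (SimpleGraph.isAcyclic_iff_forall_adj_isBridge.mp T.isTree.IsAcyclic) hab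
  exact (SimpleGraph.isBridge_iff.mp hb)

lemma side_congr {T : WeakXTree X} {v w : T.V} {e : Sym2 T.V}
    (h : (T.G.deleteEdges {e}).Reachable v w) : side T v e = side T w e := by
  ext x
  simp only [mem_side]
  exact ⟨fun h' => h.symm.trans h', fun h' => h.trans h'⟩

lemma side_compl {T : WeakXTree X} {a b : T.V} (hab : T.G.Adj a b) :
    side T b s(a, b) = (side T a s(a, b))ᶜ := by
  ext x
  simp only [mem_side, Finset.mem_compl]
  constructor
  · intro hb ha
    exact not_reach_del hab (ha.trans hb.symm)
  · intro ha
    rcases reach_or hab (T.lab x) with h | h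
    · exact absurd h.symm ha
    · exact h.symm

lemma side_or {T : WeakXTree X} {a b : T.V} (hab : T.G.Adj a b) (v : T.V) :
    side T v s(a, b) = side T a s(a, b) ∨ side T v s(a, b) = side T b s(a, b) := by
  rcases reach_or hab v with h | h
  · exact Or.inl (side_congr h)
  · exact Or.inr (side_congr h)

lemma splitOf_eq {T : WeakXTree X} {a b : T.V} (hab : T.G.Adj a b) :
    T.splitOf s(a, b) = {side T a s(a, b), side T b s(a, b)} := by
  have himg : T.splitOf s(a, b) = Finset.image (fun u => side T u s(a, b)) Finset.univ := by
    unfold WeakXTree.splitOf side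
    rfl
  rw [himg]
  apply Finset.Subset.antisymm
  · intro t ht
    rw [Finset.mem_image] at ht
    obtain ⟨u, _, rfl⟩ := ht
    rcases side_or hab u with h | h <;> simp [h]
  · intro t ht
    simp only [Finset.mem_insert, Finset.mem_singleton] at ht
    rcases ht with rfl | rfl
    · exact Finset.mem_image_of_mem _ (Finset.mem_univ a)
    · exact Finset.mem_image_of_mem _ (Finset.mem_univ b)

lemma splitOf_eq' {T : WeakXTree X} {a b : T.V} (hab : T.G.Adj a b) (v : T.V) :
    T.splitOf s(a, b) = {side T v s(a, b), (side T v s(a, b))ᶜ} := by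
  rw [splitOf_eq hab]
  rcases side_or hab v with h | h
  · rw [h, side_compl hab]
  · rw [h, side_compl hab, compl_compl, Finset.pair_comm]

lemma ne_compl_of_nonempty {s : Finset X} (hs : s.Nonempty) : s ≠ sᶜ := by
  obtain ⟨x, hx⟩ := hs
  intro h
  have := h ▸ hx
  simp at this
  exact this hx

lemma pair_eq_iff {s t : Finset X} (hs : s ≠ sᶜ) :
    ({t, tᶜ} : Finset (Finset X)) = {s, sᶜ} ↔ t = s ∨ t = sᶜ := by
  constructor
  · intro h
    have : t ∈ ({s, sᶜ} : Finset (Finset X)) := by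
      rw [← h]; simp
    simpa using this
  · rintro (rfl | rfl)
    · rfl
    · rw [compl_compl, Finset.pair_comm]

/-- every part of a partition in a partition system is a proper nonempty subset -/
lemma part_proper {P : Multiset (Finset (Finset X))} (hP : IsPartitionSystem P)
    {π : Finset (Finset X)} (hπ : π ∈ P) {A : Finset X} (hA : A ∈ π) :
    A.Nonempty ∧ Aᶜ.Nonempty := by
  obtain ⟨⟨hne, huniq⟩, hcard⟩ := hP π hπ
  refine ⟨hne A hA, ?_⟩
  obtain ⟨B, hB, hBA⟩ := Finset.exists_mem_ne hcard A
  obtain ⟨x, hx⟩ := hne B hB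
  refine ⟨x, ?_⟩
  rw [Finset.mem_compl]
  intro hxA
  obtain ⟨C, _, hCuniq⟩ := huniq x
  exact hBA ((hCuniq B ⟨hB, hx⟩).trans (hCuniq A ⟨hA, hxA⟩).symm)

section WithSystem

variable {T : WeakXTree X} {P : Multiset (Finset (Finset X))}
  (hP : IsPartitionSystem P) (hT : T.splits = systemSplits P)

lemma split_mem (hT : T.splits = systemSplits P) {e : Sym2 T.V} (he : e ∈ T.G.edgeFinset) :
    ∃ π ∈ P, ∃ A ∈ π, T.splitOf e = {A, Aᶜ} := by
  have : T.splitOf e ∈ T.splits := Multiset.mem_map_of_mem _ he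
  rw [hT] at this
  unfold systemSplits partitionSplits at this
  rw [Multiset.mem_bind] at this
  obtain ⟨π, hπ, hmem⟩ := this
  rw [Multiset.mem_map] at hmem
  obtain ⟨A, hA, hAe⟩ := hmem
  exact ⟨π, hπ, A, hA, hAe.symm⟩

lemma side_spec (hP : IsPartitionSystem P) (hT : T.splits = systemSplits P)
    (v : T.V) {e : Sym2 T.V} (he : e ∈ T.G.edgeFinset) :
    (side T v e).Nonempty ∧ (side T v e)ᶜ.Nonempty := by
  obtain ⟨a, b, hab, rfl⟩ := exists_adj he
  obtain ⟨π, hπ, A, hA, hsplit⟩ := split_mem hT he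
  obtain ⟨hAne, hAcne⟩ := part_proper hP hπ hA
  have h2 := (splitOf_eq' hab v).symm.trans hsplit
  have hv : side T v s(a, b) ∈ ({A, Aᶜ} : Finset (Finset X)) := by
    rw [← h2]; simp
  simp only [Finset.mem_insert, Finset.mem_singleton] at hv
  rcases hv with h | h
  · rw [h]; exact ⟨hAne, hAcne⟩
  · rw [h, compl_compl]; exact ⟨hAcne, hAne⟩

lemma count_M (v : T.V) (s : Finset X) :
    (M T v).count s = Multiset.countP (fun e => side T v e = s) T.G.edgeFinset.val := by
  rw [M, Multiset.count_map, Multiset.countP_eq_card_filter]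
  congr 1
  apply Multiset.filter_congr
  intro e _
  exact eq_comm

lemma countP_or_eq_add {α : Type*} (m : Multiset α) (p q : α → Prop)
    [DecidablePred p] [DecidablePred q] [DecidablePred fun a => p a ∨ q a]
    (hdisj : ∀ a ∈ m, ¬ (p a ∧ q a)) :
    Multiset.countP (fun a => p a ∨ q a) m =
      Multiset.countP p m + Multiset.countP q m := by
  induction m using Multiset.induction_on with
  | empty => simp
  | cons a t ih =>
    rw [Multiset.countP_cons, Multiset.countP_cons, Multiset.countP_cons,
      ih (fun x hx => hdisj x (Multiset.mem_cons_of_mem hx))]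
    have := hdisj a (Multiset.mem_cons_self a t)
    by_cases hp : p a <;> by_cases hq : q a <;> simp [hp, hq] at this ⊢ <;> omega

/-- the number of edges whose split is `{s, sᶜ}`, seen from any vertex `v`. -/
lemma class_count_M (hP : IsPartitionSystem P) (hT : T.splits = systemSplits P)
    (v : T.V) {s : Finset X} (hs : s ≠ sᶜ) :
    T.splits.count {s, sᶜ} = (M T v).count s + (M T v).count sᶜ := by
  rw [count_M, count_M, WeakXTree.splits, Multiset.count_map,
    ← Multiset.countP_eq_card_filter,
    ← countP_or_eq_add _ _ _ (fun e _ h => hs (h.1.symm.trans h.2))]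
  simp only [Multiset.countP_eq_card_filter]
  congr 1
  apply Multiset.filter_congr
  intro e he
  obtain ⟨a, b, hab, rfl⟩ := exists_adj (by simpa using he)
  rw [splitOf_eq' hab v, eq_comm, pair_eq_iff hs]

lemma class_count_Q (hP : IsPartitionSystem P) {s : Finset X} (hs : s ≠ sᶜ) :
    (systemSplits P).count {s, sᶜ} = (Q P).count s + (Q P).count sᶜ := by
  unfold systemSplits Q partitionSplits
  rw [Multiset.count_bind, Multiset.count_bind, Multiset.count_bind]
  rw [← Multiset.sum_map_add]
  congr 1
  apply Multiset.map_congr rfl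
  intro π hπ
  rw [Multiset.count_map, Multiset.count_map, Multiset.count_map,
    ← Multiset.card_add, Multiset.filter_add_filter]
  have h2 : Multiset.filter (fun A => s = Aᶜ ∧ sᶜ = Aᶜ) π.val = 0 := by
    rw [Multiset.filter_eq_nil]
    rintro A _ ⟨h1, h2⟩
    exact hs (h1.trans h2.symm)
  rw [h2, add_zero]
  congr 1
  apply Multiset.filter_congr
  intro A _
  constructor
  · intro h
    have hmem : s ∈ ({A, Aᶜ} : Finset (Finset X)) := h ▸ (Finset.mem_insert_self s {sᶜ})
    simp only [Finset.mem_insert, Finset.mem_singleton] at hmem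
    rcases hmem with h1 | h1
    · right; rw [h1]
    · left; exact h1
  · rintro (h | h)
    · rw [h, compl_compl, Finset.pair_comm]
    · have hsA : s = A := by rw [← compl_compl s, h, compl_compl]
      rw [hsA]

lemma class_eq (hP : IsPartitionSystem P) (hT : T.splits = systemSplits P)
    (v : T.V) {s : Finset X} (hs : s ≠ sᶜ) :
    (M T v).count s + (M T v).count sᶜ = (Q P).count s + (Q P).count sᶜ := by
  rw [← class_count_M hP hT v hs, ← class_count_Q hP hs, hT]

end WithSystem

lemma path_unique {T : WeakXTree X} {v w : T.V} {p q : T.G.Walk v w}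
    (hp : p.IsPath) (hq : q.IsPath) : p = q := by
  have := T.isTree.IsAcyclic.path_unique ⟨p, hp⟩ ⟨q, hq⟩
  exact congrArg Subtype.val this

lemma sep_iff_mem_edges {T : WeakXTree X} {v w : T.V} {p : T.G.Walk v w}
    (hp : p.IsPath) {e : Sym2 T.V} (he : e ∈ T.G.edgeSet) :
    (¬ (T.G.deleteEdges {e}).Reachable v w) ↔ e ∈ p.edges := by
  constructor
  · intro hreach
    by_contra hmem
    exact hreach ⟨p.toDeleteEdges {e} (fun e' he' h => by
      rw [Set.mem_singleton_iff] at h; exact hmem (h ▸ he'))⟩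
  · intro hmem hreach
    obtain ⟨q⟩ := hreach
    have hq' : ∀ e' ∈ q.edges, e' ∈ T.G.edgeSet := fun e' he' =>
      SimpleGraph.edgeSet_mono (SimpleGraph.deleteEdges_le _) (q.edges_subset_edgeSet he')
    set q' : T.G.Walk v w := q.transfer T.G hq' with hq'def
    have hpq : (q'.toPath : T.G.Walk v w) = p :=
      path_unique q'.toPath.2 hp
    have h1 : e ∈ q'.edges := by
      rw [← hpq] at hmem
      exact SimpleGraph.Walk.edges_toPath_subset q' hmem
    rw [hq'def, SimpleGraph.Walk.edges_transfer] at h1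
    have h2 := q.edges_subset_edgeSet h1
    rw [SimpleGraph.edgeSet_deleteEdges] at h2
    exact h2.2 rfl

lemma dist_eq_card (T : WeakXTree X) (v w : T.V) :
    T.G.dist v w = Multiset.card (T.G.edgeFinset.val.filter
      (fun e => ¬ (T.G.deleteEdges {e}).Reachable v w)) := by
  obtain ⟨p, hp, hlen⟩ := T.isTree.isConnected.exists_path_of_dist v w
  have hfil : T.G.edgeFinset.val.filter
      (fun e => ¬ (T.G.deleteEdges {e}).Reachable v w) = (↑p.edges : Multiset (Sym2 T.V)) := by
    rw [Multiset.Nodup.ext (Multiset.Nodup.filter _ T.G.edgeFinset.nodup)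
      (by exact hp.isTrail.edges_nodup)]
    intro e
    rw [Multiset.mem_filter, Multiset.mem_coe]
    constructor
    · rintro ⟨he, hr⟩
      exact (sep_iff_mem_edges hp (by simpa using he)).mp hr
    · intro he
      have he' : e ∈ T.G.edgeSet := p.edges_subset_edgeSet he
      exact ⟨by simpa [SimpleGraph.mem_edgeFinset] using he',
        (sep_iff_mem_edges hp he').mpr he⟩
  rw [hfil, Multiset.coe_card, SimpleGraph.Walk.length_edges, hlen]

lemma dist_eq_filter_M (T : WeakXTree X) (v : T.V) (x : X) :
    T.G.dist v (T.lab x) = Multiset.card ((M T v).filter (fun s => x ∉ s)) := by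
  rw [dist_eq_card, M, Multiset.filter_map, Multiset.card_map]
  congr 1
  apply Multiset.filter_congr
  intro e _
  simp only [Function.comp, mem_side]

lemma filter_partition_card {π : Finset (Finset X)} (hπ : IsPartition π) (x : X) :
    Multiset.card (π.val.filter (fun A => x ∈ A)) = 1 := by
  obtain ⟨A₀, ⟨hA₀, hxA₀⟩, huniq⟩ := hπ.2 x
  have hfil : π.val.filter (fun A => x ∈ A) = {A₀} := by
    rw [Multiset.Nodup.ext (Multiset.Nodup.filter _ π.nodup)
      (Multiset.nodup_singleton _)]
    intro B
    rw [Multiset.mem_filter, Multiset.mem_singleton]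
    constructor
    · rintro ⟨hB, hxB⟩
      exact huniq B ⟨hB, hxB⟩
    · rintro rfl
      exact ⟨hA₀, hxA₀⟩
  rw [hfil]
  rfl

lemma card_filter_Q {P : Multiset (Finset (Finset X))} (hP : IsPartitionSystem P) (x : X) :
    Multiset.card ((Q P).filter (fun s => x ∉ s)) = Multiset.card P := by
  unfold Q
  induction P using Multiset.induction_on with
  | empty => simp
  | cons π t ih =>
    have h1 : Multiset.card (Multiset.filter (fun s => x ∉ s)
        (π.val.map (fun A => Aᶜ))) = 1 := by
      rw [Multiset.filter_map, Multiset.card_map]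
      have hcong : Multiset.filter ((fun s => x ∉ s) ∘ (fun A => Aᶜ)) π.val
          = Multiset.filter (fun A => x ∈ A) π.val := by
        apply Multiset.filter_congr
        intro A _
        simp [Function.comp]
      rw [hcong]
      exact filter_partition_card (hP π (Multiset.mem_cons_self π t)).1 x
    rw [Multiset.cons_bind, Multiset.filter_add, Multiset.card_add, h1,
      ih (fun π' hπ' => hP π' (Multiset.mem_cons_of_mem hπ')),
      Multiset.card_cons, add_comm]

lemma card_eq_sum_count {α : Type*} [DecidableEq α] (m : Multiset α) {F : Finset α}
    (h : m.toFinset ⊆ F) : Multiset.card m = F.sum (fun u => m.count u) := by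
  rw [← Multiset.toFinset_sum_count_eq]
  apply Finset.sum_subset h
  intro u _ hu
  rwa [Multiset.count_eq_zero, ← Multiset.mem_toFinset]

lemma card_inter_lt {α : Type*} [DecidableEq α] (R Qm : Multiset α) {a b : α}
    (hab : a ≠ b) (ha : Qm.count a ≤ R.count a) (hb : R.count b < Qm.count b) :
    ((a ::ₘ R) ∩ Qm).card < ((b ::ₘ R) ∩ Qm).card := by
  set F : Finset α := insert a (insert b R.toFinset) with hF
  have hsub1 : ((a ::ₘ R) ∩ Qm).toFinset ⊆ F := by
    intro u hu
    rw [Multiset.mem_toFinset] at hu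
    have := Multiset.mem_of_le Multiset.inter_le_left hu
    rw [Multiset.mem_cons] at this
    rcases this with rfl | hm
    · exact Finset.mem_insert_self _ _
    · exact Finset.mem_insert_of_mem (Finset.mem_insert_of_mem (Multiset.mem_toFinset.mpr hm))
  have hsub2 : ((b ::ₘ R) ∩ Qm).toFinset ⊆ F := by
    intro u hu
    rw [Multiset.mem_toFinset] at hu
    have := Multiset.mem_of_le Multiset.inter_le_left hu
    rw [Multiset.mem_cons] at this
    rcases this with rfl | hm
    · exact Finset.mem_insert_of_mem (Finset.mem_insert_self _ _)
    · exact Finset.mem_insert_of_mem (Finset.mem_insert_of_mem (Multiset.mem_toFinset.mpr hm))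
  rw [card_eq_sum_count _ hsub1, card_eq_sum_count _ hsub2]
  apply Finset.sum_lt_sum
  · intro u _
    have hba : u ≠ b → Multiset.count u (b ::ₘ R) = Multiset.count u R :=
      fun h => Multiset.count_cons_of_ne h R
    rcases eq_or_ne u a with rfl | hua
    · rw [Multiset.count_inter, Multiset.count_inter, Multiset.count_cons_self,
        Multiset.count_cons_of_ne hab]
      omega
    · rcases eq_or_ne u b with rfl | hub
      · rw [Multiset.count_inter, Multiset.count_inter, Multiset.count_cons_self,
          Multiset.count_cons_of_ne hua]
        omega
      · rw [Multiset.count_inter, Multiset.count_inter, Multiset.count_cons_of_ne hua,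
          Multiset.count_cons_of_ne hub]
  · refine ⟨b, Finset.mem_insert_of_mem (Finset.mem_insert_self _ _), ?_⟩
    rw [Multiset.count_inter, Multiset.count_inter, Multiset.count_cons_self,
      Multiset.count_cons_of_ne (fun h => hab h.symm)]
    omega

lemma M_cons (T : WeakXTree X) {ρ c : T.V} (h : T.G.Adj ρ c) :
    ∃ R : Multiset (Finset X),
      M T ρ = side T ρ s(ρ, c) ::ₘ R ∧ M T c = (side T ρ s(ρ, c))ᶜ ::ₘ R := by
  have hg : s(ρ, c) ∈ T.G.edgeFinset.val := by
    rw [Finset.mem_val, SimpleGraph.mem_edgeFinset, SimpleGraph.mem_edgeSet]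
    exact h
  refine ⟨(T.G.edgeFinset.val.erase s(ρ, c)).map (side T ρ), ?_, ?_⟩
  · conv_lhs => rw [M, ← Multiset.cons_erase hg]
    rw [Multiset.map_cons]
  · conv_lhs => rw [M, ← Multiset.cons_erase hg]
    rw [Multiset.map_cons, ← side_compl h]
    congr 1
    apply Multiset.map_congr rfl
    intro e he
    obtain ⟨hne, _⟩ := (Multiset.Nodup.mem_erase_iff T.G.edgeFinset.nodup).mp he
    have hadj' : (T.G.deleteEdges {e}).Adj ρ c := by
      rw [SimpleGraph.deleteEdges_adj]
      exact ⟨h, fun hx => hne (Set.mem_singleton_iff.mp hx).symm⟩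
    exact side_congr hadj'.reachable.symm

theorem no_excess_aux {T : WeakXTree X} {P : Multiset (Finset (Finset X))}
    (hP : IsPartitionSystem P) (hT : T.splits = systemSplits P) (hh : Hierarchical P)
    (ρ : T.V)
    (hmax : ∀ v : T.V, ((M T v) ∩ Q P).card ≤ ((M T ρ) ∩ Q P).card)
    {s : Finset X} (hcount : (Q P).count s < (M T ρ).count s)
    {a b : T.V} (hab : T.G.Adj a b) (hmem : s(a, b) ∈ T.G.edgeFinset.val)
    (hside : side T ρ s(a, b) = s)
    (hra : (T.G.deleteEdges {s(a, b)}).Reachable ρ a) : False := by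
  have hnrb : ¬ (T.G.deleteEdges {s(a, b)}).Reachable ρ b :=
    fun hr => not_reach_del hab (hra.symm.trans hr)
  have hρb : ρ ≠ b := by rintro rfl; exact hnrb (SimpleGraph.Reachable.refl _)
  obtain ⟨W⟩ := (T.isTree.isConnected ρ b : T.G.Reachable ρ b)
  obtain ⟨w0, hw0⟩ := W.toPath
  cases w0 with
  | nil => exact hρb rfl
  | @cons _ c _ hadj w' =>
    have hgmem : s(ρ, c) ∈ T.G.edgeFinset.val := by
      rw [Finset.mem_val, SimpleGraph.mem_edgeFinset, SimpleGraph.mem_edgeSet]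
      exact hadj
    set t : Finset X := side T ρ s(ρ, c) with ht_def
    -- labels not in s are not in t
    have hsub : ∀ x : X, x ∉ s → x ∉ t := by
      intro x hxs hxt
      rw [ht_def, mem_side] at hxt
      have hxse : ¬ (T.G.deleteEdges {s(a, b)}).Reachable ρ (T.lab x) := by
        rw [← hside] at hxs
        rw [mem_side] at hxs
        exact hxs
      obtain ⟨q⟩ := hxt
      have hq' : ∀ e' ∈ q.edges, e' ∈ T.G.edgeSet := fun e' he' =>
        SimpleGraph.edgeSet_mono (SimpleGraph.deleteEdges_le _) (q.edges_subset_edgeSet he')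
      set q' : T.G.Walk ρ (T.lab x) := q.transfer T.G hq' with hq'def
      have hq'g : s(ρ, c) ∉ q'.edges := by
        rw [hq'def, SimpleGraph.Walk.edges_transfer]
        intro hm
        have h2 := q.edges_subset_edgeSet hm
        rw [SimpleGraph.edgeSet_deleteEdges] at h2
        exact h2.2 rfl
      set p2 := q'.toPath with hp2def
      have hgp2 : s(ρ, c) ∉ (p2 : T.G.Walk ρ (T.lab x)).edges :=
        fun hm => hq'g (SimpleGraph.Walk.edges_toPath_subset q' hm)
      have he_in : s(a, b) ∈ (p2 : T.G.Walk ρ (T.lab x)).edges := by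
        by_contra hne
        exact hxse ⟨(p2 : T.G.Walk ρ (T.lab x)).toDeleteEdges {s(a, b)}
          (fun e' he' hmem' => by
            rw [Set.mem_singleton_iff] at hmem'
            exact hne (hmem' ▸ he'))⟩
      have hb_sup : b ∈ (p2 : T.G.Walk ρ (T.lab x)).support :=
        SimpleGraph.Walk.snd_mem_support_of_mem_edges _ he_in
      set q1 := (p2 : T.G.Walk ρ (T.lab x)).takeUntil b hb_sup with hq1def
      have hq1 : q1.IsPath := p2.2.takeUntil hb_sup
      have hq1eq : q1 = SimpleGraph.Walk.cons hadj w' := path_unique hq1 hw0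
      have hgq1 : s(ρ, c) ∈ q1.edges := by
        rw [hq1eq, SimpleGraph.Walk.edges_cons]
        exact List.mem_cons_self
      exact hgp2 (SimpleGraph.Walk.edges_takeUntil_subset _ hb_sup hgq1)
    -- sides are nonempty with nonempty complement
    obtain ⟨htne, htcne⟩ := side_spec hP hT ρ (Finset.mem_val.mp hgmem)
    obtain ⟨hsne, hscne⟩ := side_spec hP hT ρ (Finset.mem_val.mp hmem)
    rw [hside] at hsne hscne
    have hst : s ≠ sᶜ := ne_compl_of_nonempty hsne
    have htt : t ≠ tᶜ := ne_compl_of_nonempty htne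
    have ht_pos : 0 < (M T ρ).count t :=
      Multiset.count_pos.mpr (Multiset.mem_map_of_mem _ hgmem)
    have hclass := class_eq hP hT ρ hst
    -- t is also over-represented
    have hQt : (Q P).count t < (M T ρ).count t := by
      by_cases hts : t = s
      · rw [hts]; exact hcount
      by_contra hle
      push_neg at hle
      have htQ : t ∈ Q P := Multiset.count_pos.mp (lt_of_lt_of_le ht_pos hle)
      rw [Q, Multiset.mem_bind] at htQ
      obtain ⟨π₂, hπ₂, htQ2⟩ := htQ
      rw [Multiset.mem_map] at htQ2
      obtain ⟨B, hB, hBc⟩ := htQ2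
      have hQsc : sᶜ ∈ Q P := Multiset.count_pos.mp (by omega)
      rw [Q, Multiset.mem_bind] at hQsc
      obtain ⟨π₁, hπ₁, hsQ2⟩ := hQsc
      rw [Multiset.mem_map] at hsQ2
      obtain ⟨A, hA, hAc⟩ := hsQ2
      have hAs : A = s := by rw [← compl_compl A, hAc, compl_compl]
      rw [hAs] at hA
      have hBt : B = tᶜ := by rw [← hBc, compl_compl]
      have hscB : sᶜ ⊆ B := by
        intro x hx
        rw [Finset.mem_compl] at hx
        have hxt := hsub x hx
        rw [hBt, Finset.mem_compl]
        exact hxt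
      rcases hh π₁ hπ₁ π₂ hπ₂ s hA B hB with h0 | h1 | h2
      · -- s ∩ B = ∅ forces t = s
        have hBsc : B ⊆ sᶜ := by
          intro x hxB
          rw [Finset.mem_compl]
          intro hxs
          have hx2 : x ∈ s ∩ B := Finset.mem_inter.mpr ⟨hxs, hxB⟩
          rw [h0] at hx2
          exact absurd hx2 (Finset.notMem_empty x)
        have hBeq : B = sᶜ := Finset.Subset.antisymm hBsc hscB
        apply hts
        rw [← hBc, hBeq, compl_compl]
      · -- s ∩ B = s forces B = univ
        have hsB : s ⊆ B := by
          intro x hx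
          have : x ∈ s ∩ B := h1.symm ▸ hx
          exact (Finset.mem_inter.mp this).2
        have hBuniv : B = Finset.univ := by
          apply Finset.eq_univ_iff_forall.mpr
          intro x
          by_cases hxs : x ∈ s
          · exact hsB hxs
          · exact hscB (Finset.mem_compl.mpr hxs)
        obtain ⟨y, hy⟩ := (part_proper hP hπ₂ hB).2
        rw [hBuniv, Finset.compl_univ] at hy
        exact absurd hy (Finset.notMem_empty y)
      · -- s ∩ B = B forces sᶜ = ∅
        have hBs : B ⊆ s := by
          rw [← h2]
          exact Finset.inter_subset_left
        obtain ⟨y, hy⟩ := hscne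
        have hys : y ∈ s := hBs (hscB hy)
        rw [Finset.mem_compl] at hy
        exact hy hys
    -- now move from ρ to c, contradicting maximality
    have hclass_t := class_eq hP hT ρ htt
    obtain ⟨R, hMρ, hMc⟩ := M_cons T hadj
    rw [← ht_def] at hMρ hMc
    have h1 : (M T ρ).count t = R.count t + 1 := by
      rw [hMρ, Multiset.count_cons_self]
    have h2 : (M T ρ).count tᶜ = R.count tᶜ := by
      rw [hMρ, Multiset.count_cons_of_ne (Ne.symm htt)]
    have hlt := card_inter_lt R (Q P) htt (by omega) (by omega)
    rw [← hMρ, ← hMc] at hlt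
    exact absurd (hmax c) (not_le.mpr hlt)

theorem no_excess {T : WeakXTree X} {P : Multiset (Finset (Finset X))}
    (hP : IsPartitionSystem P) (hT : T.splits = systemSplits P) (hh : Hierarchical P)
    (ρ : T.V)
    (hmax : ∀ v : T.V, ((M T v) ∩ Q P).card ≤ ((M T ρ) ∩ Q P).card)
    {s : Finset X} (hcount : (Q P).count s < (M T ρ).count s) : False := by
  have hmem_s : s ∈ M T ρ := Multiset.count_pos.mp (by omega)
  rw [M, Multiset.mem_map] at hmem_s
  obtain ⟨e, he, hside⟩ := hmem_s
  obtain ⟨a, b, hab, rfl⟩ := exists_adj (Finset.mem_val.mp he)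
  rcases reach_or hab ρ with hra | hrb
  · exact no_excess_aux hP hT hh ρ hmax hcount hab he hside hra
  · have h2 : s(b, a) = s(a, b) := Sym2.eq_swap
    exact no_excess_aux hP hT hh ρ hmax hcount hab.symm
      (by rw [h2]; exact he) (by rw [h2]; exact hside) (by rw [h2]; exact hrb)

theorem main_eq {T : WeakXTree X} {P : Multiset (Finset (Finset X))}
    (hP : IsPartitionSystem P) (hT : T.splits = systemSplits P) (hh : Hierarchical P) :
    ∃ ρ : T.V, M T ρ = Q P := by
  have hne : Nonempty T.V := T.isTree.isConnected.nonempty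
  obtain ⟨ρ, -, hmax⟩ := Finset.exists_max_image Finset.univ
    (fun v : T.V => ((M T v) ∩ Q P).card) ⟨Classical.arbitrary T.V, Finset.mem_univ _⟩
  have hmax' : ∀ v : T.V, ((M T v) ∩ Q P).card ≤ ((M T ρ) ∩ Q P).card :=
    fun v => hmax v (Finset.mem_univ v)
  refine ⟨ρ, ?_⟩
  have hcard : Multiset.card (M T ρ) = Multiset.card (Q P) := by
    have h1 : Multiset.card (M T ρ) = Multiset.card T.splits := by
      rw [M, WeakXTree.splits, Multiset.card_map, Multiset.card_map]
    have h2 : Multiset.card (systemSplits P) = Multiset.card (Q P) := by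
      unfold systemSplits Q partitionSplits
      rw [Multiset.card_bind, Multiset.card_bind]
      congr 1
      apply Multiset.map_congr rfl
      intro π _
      simp only [Function.comp_apply, Multiset.card_map]
    rw [h1, hT, h2]
  by_contra hne'
  have hnle : ¬ (M T ρ ≤ Q P) :=
    fun hle => hne' (Multiset.eq_of_le_of_card_le hle (le_of_eq hcard.symm))
  rw [Multiset.le_iff_count] at hnle
  push_neg at hnle
  obtain ⟨s, hs⟩ := hnle
  exact no_excess hP hT hh ρ hmax' hs

end Stmt16

/-- if `Π` is a hierarchical partition system, then `T_Π` has a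
vertex `ρ` with `d(ρ, u) = |Π|` for every leaf `u`. -/
theorem stmt_16 {X : Type} [Fintype X] [DecidableEq X] (hX : 2 ≤ Fintype.card X)
    (P : Multiset (Finset (Finset X))) (hP : IsPartitionSystem P)
    (hh : Hierarchical P)
    (T : WeakXTree X) (hT : T.splits = systemSplits P) :
    ∃ ρ : T.V, ∀ u : T.V, T.IsLeaf u → T.G.dist ρ u = Multiset.card P := by
  obtain ⟨ρ, hMQ⟩ := Stmt16.main_eq hP hT hh
  refine ⟨ρ, fun u hu => ?_⟩
  obtain ⟨x, rfl⟩ := T.leaf_labelled u hu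
  rw [Stmt16.dist_eq_filter_M, hMQ, Stmt16.card_filter_Q hP]
end

section
/- Let Σ be a compatible split system on X. Then there exists a hierarchical partition system Π on X with Σ_Π = Σ if and only if the weak X-tree T_Σ has a vertex ρ such that d_{T_Σ}(ρ, u) = d_{T_Σ}(ρ, v) for all labelled vertices u and v of T_Σ. -/
open scoped Classical

variable {X : Type} [Fintype X] [DecidableEq X]

set_option linter.unusedSectionVars false
set_option linter.unusedVariables false
set_option maxHeartbeats 1600000

namespace TreeAux

variable {V : Type} [Fintype V] [DecidableEq V] {G : SimpleGraph V}

/-- `Sep G e u v`: the edge `e` separates `u` from `v`. -/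
def Sep (G : SimpleGraph V) (e : Sym2 V) (u v : V) : Prop :=
  ¬ (G.deleteEdges {e}).Reachable u v

lemma sep_symm {e : Sym2 V} {u v : V} (h : Sep G e u v) : Sep G e v u :=
  fun hr => h hr.symm

lemma not_sep_self (e : Sym2 V) (u : V) : ¬ Sep G e u u :=
  fun h => h (SimpleGraph.Reachable.refl u)

lemma sep_r1 {e : Sym2 V} {u v w : V} (h1 : ¬ Sep G e u v) (h2 : ¬ Sep G e v w) :
    ¬ Sep G e u w := fun h => h ((not_not.mp h1).trans (not_not.mp h2))

/-- Along any walk, either the whole walk survives deleting an edge, or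
we reach one of the endpoints of the deleted edge. -/
lemma reach_or {w z a b : V} (p : G.Walk w z) :
    (G.deleteEdges {s(a,b)}).Reachable w z ∨ (G.deleteEdges {s(a,b)}).Reachable w a ∨
      (G.deleteEdges {s(a,b)}).Reachable w b := by
  induction p with
  | nil => exact Or.inl (SimpleGraph.Reachable.refl _)
  | @cons u x y h q ih =>
    by_cases he : s(u, x) = s(a, b)
    · rw [Sym2.eq_iff] at he
      rcases he with ⟨rfl, rfl⟩ | ⟨rfl, rfl⟩
      · exact Or.inr (Or.inl (SimpleGraph.Reachable.refl _))
      · exact Or.inr (Or.inr (SimpleGraph.Reachable.refl _))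
    · have hstep : (G.deleteEdges {s(a,b)}).Reachable u x := by
        refine ⟨SimpleGraph.Walk.cons ?_ SimpleGraph.Walk.nil⟩
        rw [SimpleGraph.deleteEdges_adj]
        exact ⟨h, by simpa using he⟩
      rcases ih with ih | ih | ih
      · exact Or.inl (hstep.trans ih)
      · exact Or.inr (Or.inl (hstep.trans ih))
      · exact Or.inr (Or.inr (hstep.trans ih))

/-- Every vertex reaches one of the two endpoints of a deleted edge. -/
lemma reach_endpoint (hG : G.IsTree) {a b : V} (w : V) :
    (G.deleteEdges {s(a,b)}).Reachable w a ∨ (G.deleteEdges {s(a,b)}).Reachable w b := by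
  obtain ⟨p⟩ := hG.isConnected.preconnected w a
  rcases reach_or (a := a) (b := b) p with h | h | h
  · exact Or.inl h
  · exact Or.inl h
  · exact Or.inr h

/-- In a tree, an edge separates its endpoints. -/
lemma sep_of_adj (hG : G.IsTree) {a b : V} (hadj : G.Adj a b) : Sep G s(a,b) a b := by
  rintro ⟨W⟩
  have hsub : ∀ e ∈ W.edges, e ∈ G.edgeSet := by
    intro e he
    have := W.edges_subset_edgeSet he
    rw [SimpleGraph.edgeSet_deleteEdges] at this
    exact this.1
  have hne : ∀ e ∈ W.edges, e ≠ s(a,b) := by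
    intro e he
    have := W.edges_subset_edgeSet he
    rw [SimpleGraph.edgeSet_deleteEdges] at this
    simpa using this.2
  set q := (W.transfer G hsub).bypass with hq
  have hqp : q.IsPath := SimpleGraph.Walk.bypass_isPath _
  have hq2 : (SimpleGraph.Walk.cons hadj SimpleGraph.Walk.nil).IsPath := by
    simp [SimpleGraph.Walk.isPath_def, hadj.ne]
  have := (hG.existsUnique_path a b).unique hqp hq2
  have hmem : s(a,b) ∈ q.edges := by
    rw [this]; simp
  have := SimpleGraph.Walk.edges_bypass_subset _ hmem
  rw [SimpleGraph.Walk.edges_transfer] at this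
  exact hne _ this rfl


/-- If `v` is separated both from `u` and from `w`, then `u,w` are on a common side. -/
lemma sep_r2 (hG : G.IsTree) {e : Sym2 V} (he : e ∈ G.edgeSet) {u v w : V}
    (h1 : Sep G e u v) (h2 : Sep G e v w) : ¬ Sep G e u w := by
  induction e with
  | _ a b =>
    have hadj : G.Adj a b := he
    rcases reach_endpoint hG (a := a) (b := b) v with hv | hv
    · rcases reach_endpoint hG (a := a) (b := b) u with hu | hu
      · exact absurd (hu.trans hv.symm) h1
      · rcases reach_endpoint hG (a := a) (b := b) w with hw | hw
        · exact (h2 (hv.trans hw.symm)).elim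
        · exact fun h => h (hu.trans hw.symm)
    · rcases reach_endpoint hG (a := a) (b := b) u with hu | hu
      · rcases reach_endpoint hG (a := a) (b := b) w with hw | hw
        · exact fun h => h (hu.trans hw.symm)
        · exact (h2 (hv.trans hw.symm)).elim
      · exact absurd (hu.trans hv.symm) h1

lemma sep_r3 (hG : G.IsTree) {e : Sym2 V} (he : e ∈ G.edgeSet) {u v w : V}
    (h1 : Sep G e u v) (h2 : ¬ Sep G e v w) : Sep G e u w := by
  intro h3
  exact h1 (h3.trans (not_not.mp h2).symm)

/-- The set of edges of the tree separating `u` from `v`. -/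
noncomputable def sepEdges (G : SimpleGraph V) (u v : V) : Finset (Sym2 V) :=
  G.edgeFinset.filter (fun e => Sep G e u v)

lemma mem_sepEdges {u v : V} {e : Sym2 V} :
    e ∈ sepEdges G u v ↔ e ∈ G.edgeSet ∧ Sep G e u v := by
  simp [sepEdges, SimpleGraph.mem_edgeFinset]

lemma sepEdges_comm (u v : V) : sepEdges G u v = sepEdges G v u := by
  ext e; simp only [mem_sepEdges]
  exact ⟨fun ⟨h1, h2⟩ => ⟨h1, sep_symm h2⟩, fun ⟨h1, h2⟩ => ⟨h1, sep_symm h2⟩⟩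

/-- In a tree, the separating edges are exactly the edges of the (unique) path. -/
lemma sepEdges_eq_path_edges (hG : G.IsTree) {u v : V} (p : G.Walk u v) (hp : p.IsPath) :
    sepEdges G u v = p.edges.toFinset := by
  ext e
  simp only [mem_sepEdges, List.mem_toFinset]
  constructor
  · rintro ⟨he, hsep⟩
    by_contra hne
    refine hsep ⟨p.toDeleteEdges {e} ?_⟩
    intro f hf
    simp only [Set.mem_singleton_iff]
    exact fun h => hne (h ▸ hf)
  · intro hmem
    refine ⟨p.edges_subset_edgeSet hmem, ?_⟩
    rintro ⟨W⟩
    have hsub : ∀ f ∈ W.edges, f ∈ G.edgeSet := by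
      intro f hf
      have := W.edges_subset_edgeSet hf
      rw [SimpleGraph.edgeSet_deleteEdges] at this
      exact this.1
    have hne : ∀ f ∈ W.edges, f ≠ e := by
      intro f hf
      have := W.edges_subset_edgeSet hf
      rw [SimpleGraph.edgeSet_deleteEdges] at this
      simpa using this.2
    set q := (W.transfer G hsub).bypass with hq
    have hqp : q.IsPath := SimpleGraph.Walk.bypass_isPath _
    have hpq : q = p := (hG.existsUnique_path u v).unique hqp hp
    have : e ∈ q.edges := hpq ▸ hmem
    have := SimpleGraph.Walk.edges_bypass_subset _ this
    rw [SimpleGraph.Walk.edges_transfer] at this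
    exact hne _ this rfl

lemma card_sepEdges (hG : G.IsTree) (u v : V) :
    (sepEdges G u v).card = G.dist u v := by
  obtain ⟨p, hp, hlen⟩ := hG.isConnected.exists_path_of_dist u v
  rw [sepEdges_eq_path_edges hG p hp, List.toFinset_card_of_nodup hp.isTrail.edges_nodup,
    SimpleGraph.Walk.length_edges, hlen]

lemma sepEdges_self (u : V) : sepEdges G u u = ∅ := by
  ext e; simp [mem_sepEdges, not_sep_self]

/-- The symmetric-difference law for separating edge sets. -/
lemma sepEdges_symmDiff (hG : G.IsTree) (u v w : V) :
    sepEdges G u w = symmDiff (sepEdges G u v) (sepEdges G v w) := by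
  ext e
  simp only [Finset.mem_symmDiff, mem_sepEdges]
  constructor
  · intro ⟨he, hsep⟩
    by_cases h1 : Sep G e u v
    · refine Or.inl ⟨⟨he, h1⟩, ?_⟩
      rintro ⟨-, h2⟩
      exact sep_r2 hG he (sep_symm h1) hsep h2
    · exact Or.inr ⟨⟨he, sep_symm (sep_r3 hG he (sep_symm hsep) h1)⟩, fun c => h1 c.2⟩
  · rintro (⟨⟨he, h1⟩, h2⟩ | ⟨⟨he, h1⟩, h2⟩)
    · refine ⟨he, sep_r3 hG he h1 (fun c => h2 ⟨he, c⟩)⟩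
    · refine ⟨he, sep_symm (sep_r3 hG he (sep_symm h1) (fun c => h2 ⟨he, sep_symm c⟩))⟩

/-- counting form of symmDiff. -/
lemma card_symmDiff {α : Type} [DecidableEq α] (A B : Finset α) :
    (symmDiff A B).card + 2 * (A ∩ B).card = A.card + B.card := by
  rw [symmDiff_eq_sup_sdiff_inf]
  simp only [Finset.sup_eq_union, Finset.inf_eq_inter]
  rw [Finset.card_sdiff_of_subset Finset.inter_subset_union]
  have h := Finset.card_union_add_card_inter A B
  have h2 : (A ∩ B).card ≤ (A ∪ B).card := Finset.card_le_card Finset.inter_subset_union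
  omega


/-- `below G ρ e f`: seen from the root `ρ`, everything beyond `e` is beyond `f`. -/
def below (G : SimpleGraph V) (ρ : V) (e f : Sym2 V) : Prop :=
  ∀ v : V, Sep G e ρ v → Sep G f ρ v

lemma below_refl (ρ : V) (e : Sym2 V) : below G ρ e e := fun _ h => h

lemma below_trans {ρ : V} {e f g : Sym2 V} (h1 : below G ρ e f) (h2 : below G ρ f g) :
    below G ρ e g := fun v h => h2 v (h1 v h)

/-- Each edge has one endpoint separated from `ρ` and one not. -/
lemma exists_far_endpoint (hG : G.IsTree) {e : Sym2 V} (he : e ∈ G.edgeSet) (ρ : V) :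
    ∃ a b : V, e = s(a,b) ∧ ¬ Sep G e ρ a ∧ Sep G e ρ b := by
  induction e with
  | _ a b =>
    have hadj : G.Adj a b := he
    have hab : Sep G s(a,b) a b := sep_of_adj hG hadj
    by_cases h : Sep G s(a,b) ρ a
    · refine ⟨b, a, Sym2.eq_swap, ?_, h⟩
      intro hb
      exact sep_r2 hG he (sep_symm h) hb hab
    · exact ⟨a, b, rfl, h, sep_symm (sep_r3 hG he (sep_symm hab) (fun c => h (sep_symm c)))⟩

/-- The unique path between adjacent vertices is the single edge. -/
lemma sepEdges_adj (hG : G.IsTree) {a b : V} (hadj : G.Adj a b) :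
    sepEdges G a b = {s(a,b)} := by
  have hp : (SimpleGraph.Walk.cons hadj SimpleGraph.Walk.nil).IsPath := by
    simp [SimpleGraph.Walk.isPath_def, hadj.ne]
  rw [sepEdges_eq_path_edges hG _ hp]
  simp

/-- Absorption: if some endpoint `a` of `f` is separated from `ρ` by `e`, then
everything separated by `f` is separated by `e`. -/
lemma absorb (hG : G.IsTree) {e f : Sym2 V} (he : e ∈ G.edgeSet) (hf : f ∈ G.edgeSet)
    {a b : V} (hfab : f = s(a,b)) {ρ : V} (hsepa : Sep G e ρ a) : below G ρ f e := by
  intro v hfv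
  obtain ⟨p, hp⟩ := (hG.existsUnique_path ρ v)
  have hfp : f ∈ p.edges := by
    have : f ∈ sepEdges G ρ v := mem_sepEdges.mpr ⟨hf, hfv⟩
    rw [sepEdges_eq_path_edges hG p hp.1] at this
    simpa using this
  have hasupp : a ∈ p.support := by
    subst hfab
    exact p.fst_mem_support_of_mem_edges hfp
  have hsub : sepEdges G ρ a ⊆ sepEdges G ρ v := by
    rw [sepEdges_eq_path_edges hG p hp.1,
      sepEdges_eq_path_edges hG (p.takeUntil a hasupp) (hp.1.takeUntil hasupp)]
    intro x hx
    rw [List.mem_toFinset] at hx ⊢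
    exact p.edges_takeUntil_subset _ hx
  exact (mem_sepEdges.mp (hsub (mem_sepEdges.mpr ⟨he, hsepa⟩))).2

/-- antisymmetry of `below` on edges. -/
lemma below_antisymm (hG : G.IsTree) {e f : Sym2 V} (he : e ∈ G.edgeSet)
    (hf : f ∈ G.edgeSet) {ρ : V} (h1 : below G ρ e f) (h2 : below G ρ f e) : e = f := by
  obtain ⟨c, d, rfl, hc, hd⟩ := exists_far_endpoint hG he ρ
  have hfd : Sep G f ρ d := h1 d hd
  have hfc : ¬ Sep G f ρ c := fun hc' => hc (h2 c hc')
  have hfcd : Sep G f c d := sep_symm (sep_r3 hG hf (sep_symm hfd) hfc)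
  have : f ∈ sepEdges G c d := mem_sepEdges.mpr ⟨hf, hfcd⟩
  rw [sepEdges_adj hG (by exact he)] at this
  exact (Finset.mem_singleton.mp this).symm

/-- The nesting lemma: two edges both separating `w` from `ρ` are comparable. -/
lemma nest (hG : G.IsTree) {e f : Sym2 V} (he : e ∈ G.edgeSet) (hf : f ∈ G.edgeSet)
    {ρ w : V} (hew : Sep G e ρ w) (hfw : Sep G f ρ w) :
    below G ρ e f ∨ below G ρ f e := by
  obtain ⟨a, b, hfab, hfa, hfb⟩ := exists_far_endpoint hG hf ρ
  obtain ⟨c, d, heab, hec, hed⟩ := exists_far_endpoint hG he ρ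
  by_cases h1 : Sep G e ρ a
  · exact Or.inr (absorb hG he hf hfab h1)
  by_cases h2 : Sep G e ρ b
  · exact Or.inr (absorb hG he hf (hfab.trans Sym2.eq_swap) h2)
  by_cases h3 : Sep G f ρ c
  · exact Or.inl (absorb hG hf he heab h3)
  by_cases h4 : Sep G f ρ d
  · exact Or.inl (absorb hG hf he (heab.trans Sym2.eq_swap) h4)
  -- impossible case
  exfalso
  have hfdw : Sep G f d w := sep_symm (sep_r3 hG hf (sep_symm hfw) h4)
  have heda : Sep G e d a := sep_r3 hG he (sep_symm hed) h1
  have : Sep G e d w := absorb hG he hf hfab heda w hfdw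
  exact sep_r2 hG he (sep_symm hew) hed (sep_symm this)


/-- Two up-closed subsets of the chain `sepEdges ρ w` are comparable. -/
lemma upclosed_comparable (hG : G.IsTree) {ρ w : V} {A B : Finset (Sym2 V)}
    (hA : A ⊆ sepEdges G ρ w) (hB : B ⊆ sepEdges G ρ w)
    (hupA : ∀ e ∈ A, ∀ f ∈ sepEdges G ρ w, below G ρ e f → f ∈ A)
    (hupB : ∀ e ∈ B, ∀ f ∈ sepEdges G ρ w, below G ρ e f → f ∈ B) :
    A ⊆ B ∨ B ⊆ A := by
  by_contra hc
  rw [not_or] at hc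
  obtain ⟨e, heA, heB⟩ := Finset.not_subset.mp hc.1
  obtain ⟨f, hfB, hfA⟩ := Finset.not_subset.mp hc.2
  have he' := mem_sepEdges.mp (hA heA)
  have hf' := mem_sepEdges.mp (hB hfB)
  rcases nest hG he'.1 hf'.1 he'.2 hf'.2 with h | h
  · exact hfA (hupA e heA f (hB hfB) h)
  · exact heB (hupB f hfB e (hA heA) h)

/-- Betweenness from additivity of distance. -/
lemma between_of_dist (hG : G.IsTree) {a m b : V}
    (h : G.dist a m + G.dist m b = G.dist a b) :
    sepEdges G a m ⊆ sepEdges G a b ∧ sepEdges G m b ⊆ sepEdges G a b := by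
  have hΔ : sepEdges G a b = symmDiff (sepEdges G a m) (sepEdges G m b) :=
    sepEdges_symmDiff hG a m b
  have hcard := card_symmDiff (sepEdges G a m) (sepEdges G m b)
  rw [← hΔ] at hcard
  rw [card_sepEdges hG, card_sepEdges hG, card_sepEdges hG] at hcard
  have hint : (sepEdges G a m ∩ sepEdges G m b) = ∅ := by
    rw [← Finset.card_eq_zero]; omega
  constructor
  · intro e he
    rw [hΔ, Finset.mem_symmDiff]
    refine Or.inl ⟨he, fun hb => ?_⟩
    have : e ∈ sepEdges G a m ∩ sepEdges G m b := Finset.mem_inter.mpr ⟨he, hb⟩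
    simp [hint] at this
  · intro e he
    rw [hΔ, Finset.mem_symmDiff]
    refine Or.inr ⟨he, fun hb => ?_⟩
    have : e ∈ sepEdges G a m ∩ sepEdges G m b := Finset.mem_inter.mpr ⟨hb, he⟩
    simp [hint] at this

/-- Existence of a vertex at distance `k` along the way from `a` to `b`. -/
lemma exists_mid (hG : G.IsTree) (a b : V) :
    ∀ k, k ≤ G.dist a b → ∃ m : V, G.dist a m = k ∧ G.dist a m + G.dist m b = G.dist a b := by
  intro k
  induction k with
  | zero =>
    intro _
    exact ⟨a, by simp⟩
  | succ k ih =>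
    intro hk
    obtain ⟨m, h1, h2⟩ := ih (Nat.le_of_succ_le hk)
    have hmb : G.dist m b ≠ 0 := by omega
    obtain ⟨p, hp⟩ := SimpleGraph.exists_walk_of_dist_ne_zero hmb
    cases p with
    | nil => simp at hp; omega
    | @cons _ m' _ hadj q =>
      refine ⟨m', ?_, ?_⟩
      · have hub : G.dist a m' ≤ k + 1 := by
          have h3 : G.dist a m' ≤ G.dist a m + G.dist m m' :=
            hG.isConnected.dist_triangle
          have h4 : G.dist m m' ≤ 1 :=
            SimpleGraph.dist_le (SimpleGraph.Walk.cons hadj SimpleGraph.Walk.nil)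
          omega
        have hq : G.dist m' b ≤ q.length := SimpleGraph.dist_le q
        have hql : q.length + 1 = G.dist m b := by
          simpa using hp
        have hlb : G.dist a b ≤ G.dist a m' + G.dist m' b :=
          hG.isConnected.dist_triangle
        omega
      · have hub : G.dist a m' ≤ k + 1 := by
          have h3 : G.dist a m' ≤ G.dist a m + G.dist m m' :=
            hG.isConnected.dist_triangle
          have h4 : G.dist m m' ≤ 1 :=
            SimpleGraph.dist_le (SimpleGraph.Walk.cons hadj SimpleGraph.Walk.nil)
          omega
        have hq : G.dist m' b ≤ q.length := SimpleGraph.dist_le q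
        have hql : q.length + 1 = G.dist m b := by
          simpa using hp
        have hlb : G.dist a b ≤ G.dist a m' + G.dist m' b :=
          hG.isConnected.dist_triangle
        omega


/-- the set of "ancestors" of an edge `e` seen from root `ρ` (including `e`). -/
noncomputable def anc (G : SimpleGraph V) (ρ : V) (e : Sym2 V) : Finset (Sym2 V) :=
  G.edgeFinset.filter (fun f => below G ρ e f)

/-- the depth of an edge seen from `ρ`. -/
noncomputable def dep (G : SimpleGraph V) (ρ : V) (e : Sym2 V) : ℕ :=
  (anc G ρ e).card

lemma mem_anc {ρ : V} {e f : Sym2 V} :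
    f ∈ anc G ρ e ↔ f ∈ G.edgeSet ∧ below G ρ e f := by
  simp [anc, SimpleGraph.mem_edgeFinset]

lemma anc_eq_filter {ρ w : V} {e : Sym2 V} (he : e ∈ sepEdges G ρ w) :
    anc G ρ e = (sepEdges G ρ w).filter (fun f => below G ρ e f) := by
  ext f
  simp only [mem_anc, Finset.mem_filter, mem_sepEdges]
  constructor
  · rintro ⟨h1, h2⟩
    exact ⟨⟨h1, h2 w (mem_sepEdges.mp he).2⟩, h2⟩
  · rintro ⟨⟨h1, _⟩, h2⟩
    exact ⟨h1, h2⟩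

lemma anc_subset {ρ w : V} {e : Sym2 V} (he : e ∈ sepEdges G ρ w) :
    anc G ρ e ⊆ sepEdges G ρ w := by
  rw [anc_eq_filter he]; exact Finset.filter_subset _ _

lemma dep_pos {ρ : V} {e : Sym2 V} (he : e ∈ G.edgeSet) : 1 ≤ dep G ρ e :=
  Finset.card_pos.mpr ⟨e, mem_anc.mpr ⟨he, below_refl ρ e⟩⟩

lemma dep_le {ρ w : V} {e : Sym2 V} (he : e ∈ sepEdges G ρ w) :
    dep G ρ e ≤ (sepEdges G ρ w).card :=
  Finset.card_le_card (anc_subset he)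

lemma dep_inj (hG : G.IsTree) {ρ w : V} {e f : Sym2 V} (he : e ∈ sepEdges G ρ w)
    (hf : f ∈ sepEdges G ρ w) (hd : dep G ρ e = dep G ρ f) : e = f := by
  obtain ⟨he1, he2⟩ := mem_sepEdges.mp he
  obtain ⟨hf1, hf2⟩ := mem_sepEdges.mp hf
  by_contra hne
  have key : ∀ {x y : Sym2 V}, x ∈ G.edgeSet → y ∈ G.edgeSet → below G ρ x y →
      dep G ρ x = dep G ρ y → x = y := by
    intro x y hx hy h hdxy
    have hsub : anc G ρ y ⊆ anc G ρ x := fun g hg => by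
      obtain ⟨hg1, hg2⟩ := mem_anc.mp hg
      exact mem_anc.mpr ⟨hg1, below_trans h hg2⟩
    have heq : anc G ρ y = anc G ρ x :=
      Finset.eq_of_subset_of_card_le hsub (le_of_eq hdxy)
    have : x ∈ anc G ρ y := heq ▸ mem_anc.mpr ⟨hx, below_refl ρ x⟩
    exact below_antisymm hG hx hy h (mem_anc.mp this).2
  rcases nest hG he1 hf1 he2 hf2 with h | h
  · exact hne (key he1 hf1 h hd)
  · exact hne ((key hf1 he1 h hd.symm).symm)

/-- On the chain `sepEdges ρ w`, each admissible depth is attained exactly once. -/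
lemma rank_bij (hG : G.IsTree) {ρ w : V} {k : ℕ} (hk1 : 1 ≤ k)
    (hk2 : k ≤ (sepEdges G ρ w).card) :
    ∃! e, e ∈ sepEdges G ρ w ∧ dep G ρ e = k := by
  have hsurj := Finset.surj_on_of_inj_on_of_card_le
    (s := sepEdges G ρ w) (t := Finset.Icc 1 (sepEdges G ρ w).card)
    (fun e _ => dep G ρ e)
    (fun e he => Finset.mem_Icc.mpr ⟨dep_pos (mem_sepEdges.mp he).1, dep_le he⟩)
    (fun e f he hf hd => dep_inj hG he hf hd)
    (by rw [Nat.card_Icc]; omega)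
  obtain ⟨e, he, hke⟩ := hsurj k (Finset.mem_Icc.mpr ⟨hk1, hk2⟩)
  refine ⟨e, ⟨he, hke.symm⟩, ?_⟩
  rintro f ⟨hf, hkf⟩
  exact dep_inj hG hf he (by rw [hkf, hke])


/-- Key geometric step: the midpoint of a diametral-type pair is equidistant. -/
lemma mid_dist (hG : G.IsTree) {a b m w : V} {k : ℕ}
    (ham : G.dist a m = k) (hadd : G.dist a m + G.dist m b = G.dist a b)
    (hD : G.dist a b = 2*k) (haw : G.dist a w = 2*k) (hbw : G.dist b w ≤ 2*k) :
    G.dist m w = k := by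
  set Au := sepEdges G a m with hAu
  set Sab := sepEdges G a b with hSab
  set Saw := sepEdges G a w with hSaw
  have hAu_sub : Au ⊆ Sab := (between_of_dist hG hadd).1
  have hcAu : Au.card = k := by rw [hAu, card_sepEdges hG]; exact ham
  have hcSab : Sab.card = 2*k := by rw [hSab, card_sepEdges hG]; exact hD
  have hcSaw : Saw.card = 2*k := by rw [hSaw, card_sepEdges hG]; exact haw
  have hbw' : (sepEdges G b w).card ≤ 2*k := by rw [card_sepEdges hG]; exact hbw
  -- the intersection X₁ is big
  have hΔ : sepEdges G b w = symmDiff Sab Saw := by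
    rw [sepEdges_symmDiff hG b a w, ← sepEdges_comm]
  have hX1card : k ≤ (Sab ∩ Saw).card := by
    have := card_symmDiff Sab Saw
    rw [← hΔ] at this
    omega
  -- comparability of the two up-closed sets Au and Sab ∩ Saw
  have hcomp : Au ⊆ Sab ∩ Saw ∨ Sab ∩ Saw ⊆ Au := by
    apply upclosed_comparable hG (w := b) hAu_sub (Finset.inter_subset_left)
    · intro e he f hf hbel
      obtain ⟨he1, he2⟩ := mem_sepEdges.mp (hAu_sub he)
      have : Sep G f a m := hbel m (mem_sepEdges.mp he).2
      exact mem_sepEdges.mpr ⟨(mem_sepEdges.mp hf).1, this⟩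
    · intro e he f hf hbel
      rw [Finset.mem_inter] at he
      refine Finset.mem_inter.mpr ⟨hf, ?_⟩
      have : Sep G f a w := hbel w (mem_sepEdges.mp he.2).2
      exact mem_sepEdges.mpr ⟨(mem_sepEdges.mp hf).1, this⟩
  have hAu_Saw : Au ⊆ Saw := by
    rcases hcomp with hc | hc
    · exact hc.trans Finset.inter_subset_right
    · have : Sab ∩ Saw = Au := Finset.eq_of_subset_of_card_le hc (by omega)
      rw [← this]
      exact Finset.inter_subset_right
  -- now compute the distance from m to w
  have hΔ2 : sepEdges G m w = symmDiff Au Saw := by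
    rw [sepEdges_symmDiff hG m a w, ← sepEdges_comm]
  have hint : Au ∩ Saw = Au := Finset.inter_eq_left.mpr hAu_Saw
  have hfin := card_symmDiff Au Saw
  rw [← hΔ2, hint] at hfin
  rw [← card_sepEdges hG m w]
  omega


end TreeAux

namespace WeakXTree
open TreeAux
variable {X : Type} [Fintype X] [DecidableEq X] {T : WeakXTree X}

/-- The labels on the far side of edge `e`, seen from `ρ`. -/
noncomputable def farLabels (T : WeakXTree X) (ρ : T.V) (e : Sym2 T.V) : Finset X :=
  Finset.univ.filter (fun x => Sep T.G e ρ (T.lab x))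

lemma mem_farLabels {ρ : T.V} {e : Sym2 T.V} {x : X} :
    x ∈ T.farLabels ρ e ↔ Sep T.G e ρ (T.lab x) := by
  simp [farLabels]

/-- The split displayed by an edge in terms of far labels. -/
lemma splitOf_eq_s17 {e : Sym2 T.V} (he : e ∈ T.G.edgeSet) (ρ : T.V) :
    T.splitOf e = {T.farLabels ρ e, (T.farLabels ρ e)ᶜ} := by
  obtain ⟨a, b, rfl, hna, hfb⟩ := exists_far_endpoint T.isTree he ρ
  have hab : T.G.Adj a b := he
  set N : T.V → Finset X := fun u =>
    Finset.univ.filter (fun x : X => (T.G.deleteEdges {s(a,b)}).Reachable u (T.lab x)) with hN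
  have hNcases : ∀ u : T.V, N u = N a ∨ N u = N b := by
    intro u
    rcases reach_endpoint T.isTree (a := a) (b := b) u with h | h
    · left
      ext x
      simp only [hN, Finset.mem_filter, Finset.mem_univ, true_and]
      exact ⟨fun c => h.symm.trans c, fun c => h.trans c⟩
    · right
      ext x
      simp only [hN, Finset.mem_filter, Finset.mem_univ, true_and]
      exact ⟨fun c => h.symm.trans c, fun c => h.trans c⟩
  have hρa : (T.G.deleteEdges {s(a,b)}).Reachable ρ a := not_not.mp hna
  have hSab : Sep T.G s(a,b) a b :=
    sep_symm (sep_r3 T.isTree he (sep_symm hfb) hna)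
  have hNb : N b = (N a)ᶜ := by
    ext x
    simp only [hN, Finset.mem_filter, Finset.mem_univ, true_and, Finset.mem_compl]
    constructor
    · intro hb ha
      exact hSab (ha.trans hb.symm)
    · intro ha
      rcases reach_endpoint T.isTree (a := a) (b := b) (T.lab x) with h | h
      · exact (ha h.symm).elim
      · exact h.symm
  have himg : T.splitOf s(a,b) = {N a, N b} := by
    apply Finset.ext
    intro A
    simp only [splitOf, Finset.mem_image, Finset.mem_univ, true_and, Finset.mem_insert,
      Finset.mem_singleton]
    constructor
    · rintro ⟨u, rfl⟩
      exact hNcases u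
    · rintro (rfl | rfl)
      · exact ⟨a, rfl⟩
      · exact ⟨b, rfl⟩
  have hfar : T.farLabels ρ s(a,b) = N b := by
    ext x
    rw [mem_farLabels, hNb]
    simp only [hN, Finset.mem_compl, Finset.mem_filter, Finset.mem_univ, true_and]
    constructor
    · intro hsep ha
      exact hsep (hρa.trans ha)
    · intro ha hsep
      exact ha (hρa.symm.trans hsep)
  rw [himg, hfar, hNb, compl_compl, Finset.pair_comm]


end WeakXTree

section MultisetLemmas
variable {α β : Type}

lemma rel_count {r : α → β → Prop} {s : Multiset α} {t : Multiset β}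
    (h : Multiset.Rel r s t) (p : α → Prop) (q : β → Prop) [DecidablePred p] [DecidablePred q]
    (hpq : ∀ a b, a ∈ s → r a b → (p a ↔ q b)) :
    Multiset.card (s.filter p) = Multiset.card (t.filter q) := by
  induction h with
  | zero => simp
  | @cons a b s t hab hst ih =>
    have hiff := hpq a b (Multiset.mem_cons_self a s) hab
    have ih' := ih (fun a' b' ha' => hpq a' b' (Multiset.mem_cons_of_mem ha'))
    by_cases hp : p a
    · rw [Multiset.filter_cons_of_pos _ hp, Multiset.filter_cons_of_pos _ (hiff.mp hp)]
      simp [ih']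
    · rw [Multiset.filter_cons_of_neg _ hp, Multiset.filter_cons_of_neg _ (fun c => hp (hiff.mpr c))]
      exact ih'
  
lemma xor_count (Q : Multiset α) (p q : α → Prop) [DecidablePred p] [DecidablePred q] :
    Multiset.card (Q.filter (fun a => Xor' (p a) (q a))) +
      2 * Multiset.card (Q.filter (fun a => p a ∧ q a)) =
    Multiset.card (Q.filter p) + Multiset.card (Q.filter q) := by
  induction Q using Multiset.induction_on with
  | empty => simp
  | cons a Q ih =>
    by_cases hp : p a <;> by_cases hq : q a
    · rw [Multiset.filter_cons_of_neg (p := fun a => Xor' (p a) (q a)) _ (by simp [Xor', hp, hq]),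
        Multiset.filter_cons_of_pos (p := fun a => p a ∧ q a) _ ⟨hp, hq⟩,
        Multiset.filter_cons_of_pos _ hp,
        Multiset.filter_cons_of_pos _ hq]
      simp only [Multiset.card_cons]
      omega
    · rw [Multiset.filter_cons_of_pos (p := fun a => Xor' (p a) (q a)) _ (by simp [Xor', hp, hq]),
        Multiset.filter_cons_of_neg (p := fun a => p a ∧ q a) _ (by simp [hq]),
        Multiset.filter_cons_of_pos _ hp,
        Multiset.filter_cons_of_neg _ hq]
      simp only [Multiset.card_cons]
      omega
    · rw [Multiset.filter_cons_of_pos (p := fun a => Xor' (p a) (q a)) _ (by simp [Xor', hp, hq]),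
        Multiset.filter_cons_of_neg (p := fun a => p a ∧ q a) _ (by simp [hp]),
        Multiset.filter_cons_of_neg _ hp,
        Multiset.filter_cons_of_pos _ hq]
      simp only [Multiset.card_cons]
      omega
    · rw [Multiset.filter_cons_of_neg (p := fun a => Xor' (p a) (q a)) _ (by simp [Xor', hp, hq]),
        Multiset.filter_cons_of_neg (p := fun a => p a ∧ q a) _ (by simp [hq]),
        Multiset.filter_cons_of_neg _ hp,
        Multiset.filter_cons_of_neg _ hq]
      omega

end MultisetLemmas

section PartLemmas
variable {X : Type} [Fintype X] [DecidableEq X]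

/-- each element lies in exactly one part of each partition, counted over the system. -/
lemma count_parts (P : Multiset (Finset (Finset X))) (hP : ∀ π ∈ P, IsPartition π) (x : X) :
    Multiset.card ((P.bind Finset.val).filter (fun A => x ∈ A)) = Multiset.card P := by
  induction P using Multiset.induction_on with
  | empty => simp
  | cons π P ih =>
    rw [Multiset.cons_bind, Multiset.filter_add, Multiset.card_add, Multiset.card_cons]
    have h1 : Multiset.card (Multiset.filter (fun A => x ∈ A) π.val) = 1 := by
      obtain ⟨A, ⟨hA, hxA⟩, huniq⟩ := (hP π (Multiset.mem_cons_self π P)).2 x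
      have hfin : π.filter (fun A => x ∈ A) = {A} := by
        rw [Finset.eq_singleton_iff_unique_mem]
        refine ⟨Finset.mem_filter.mpr ⟨hA, hxA⟩, fun B hB => ?_⟩
        have := Finset.mem_filter.mp hB
        exact huniq B ⟨this.1, this.2⟩
      have : Multiset.filter (fun A => x ∈ A) π.val = (π.filter (fun A => x ∈ A)).val := rfl
      rw [this, hfin]
      rfl
    rw [h1, ih (fun π' hπ' => hP π' (Multiset.mem_cons_of_mem hπ'))]
    omega

end PartLemmas

section PartLemmas2
variable {X : Type} [Fintype X] [DecidableEq X]

lemma filter_card_mono {α : Type} {s : Multiset α} {p q : α → Prop} [DecidablePred p]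
    [DecidablePred q] (h : ∀ a ∈ s, p a → q a) :
    Multiset.card (s.filter p) ≤ Multiset.card (s.filter q) := by
  induction s using Multiset.induction_on with
  | empty => simp
  | cons a s ih =>
    have ih' := ih (fun a' ha' => h a' (Multiset.mem_cons_of_mem ha'))
    have ha := h a (Multiset.mem_cons_self a s)
    by_cases hp : p a
    · rw [Multiset.filter_cons_of_pos _ hp, Multiset.filter_cons_of_pos _ (ha hp)]
      simpa using ih'
    · rw [Multiset.filter_cons_of_neg _ hp]
      by_cases hq : q a
      · rw [Multiset.filter_cons_of_pos _ hq, Multiset.card_cons]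
        omega
      · rw [Multiset.filter_cons_of_neg _ hq]
        exact ih'

/-- ultrametric-type inequality for common counts in a hierarchy. -/
lemma common_min {Q : Multiset (Finset X)}
    (hQ : ∀ A ∈ Q, ∀ B ∈ Q, A ∩ B = ∅ ∨ A ∩ B = A ∨ A ∩ B = B) (x y z : X) :
    min (Multiset.card (Q.filter (fun A => x ∈ A ∧ y ∈ A)))
        (Multiset.card (Q.filter (fun A => y ∈ A ∧ z ∈ A))) ≤
      Multiset.card (Q.filter (fun A => x ∈ A ∧ z ∈ A)) := by
  have key : (∀ A ∈ Q, x ∈ A ∧ y ∈ A → z ∈ A) ∨ (∀ A ∈ Q, y ∈ A ∧ z ∈ A → x ∈ A) := by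
    by_contra hc
    rw [not_or] at hc
    push_neg at hc
    obtain ⟨⟨A, hA, ⟨hxA, hyA⟩, hzA⟩, ⟨B, hB, ⟨hyB, hzB⟩, hxB⟩⟩ := hc
    rcases hQ A hA B hB with h | h | h
    · have : y ∈ A ∩ B := Finset.mem_inter.mpr ⟨hyA, hyB⟩
      rw [h] at this
      simp at this
    · have : x ∈ A ∩ B := h.symm ▸ hxA
      exact hxB (Finset.mem_inter.mp this).2
    · have : z ∈ A ∩ B := h.symm ▸ hzB
      exact hzA (Finset.mem_inter.mp this).1
  rcases key with h | h
  · exact le_trans (min_le_left _ _)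
      (filter_card_mono (fun A hA hxy => ⟨hxy.1, h A hA hxy⟩))
  · exact le_trans (min_le_right _ _)
      (filter_card_mono (fun A hA hyz => ⟨h A hA hyz, hyz.2⟩))

end PartLemmas2


open TreeAux WeakXTree

theorem backward_dir {X : Type} [Fintype X] [DecidableEq X] (hX : 2 ≤ Fintype.card X)
    (S : Multiset (Finset (Finset X))) (hS : IsSplitSystem S)
    (T : WeakXTree X) (hT : T.splits = S) (ρ : T.V)
    (hρ : ∀ u v : T.V, u ∈ Set.range T.lab → v ∈ Set.range T.lab →
      T.G.dist ρ u = T.G.dist ρ v) :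
    ∃ P : Multiset (Finset (Finset X)),
        IsPartitionSystem P ∧ Hierarchical P ∧ systemSplits P = S := by
  have hXne : Nonempty X := Fintype.card_pos_iff.mp (by omega)
  obtain ⟨x₀⟩ := hXne
  set G := T.G with hG
  have htree := T.isTree
  set h := G.dist ρ (T.lab x₀) with hh
  have hhx : ∀ x : X, G.dist ρ (T.lab x) = h :=
    fun x => hρ (T.lab x) (T.lab x₀) ⟨x, rfl⟩ ⟨x₀, rfl⟩
  have hcardx : ∀ x : X, (sepEdges G ρ (T.lab x)).card = h :=
    fun x => (card_sepEdges htree ρ (T.lab x)).trans (hhx x)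
  -- the split of each edge is a genuine split
  have hsplit : ∀ e ∈ G.edgeFinset, IsSplit (T.splitOf e) := by
    intro e he
    apply hS
    rw [← hT]
    exact Multiset.mem_map_of_mem _ he
  have far_ne : ∀ e ∈ G.edgeFinset, (T.farLabels ρ e).Nonempty ∧
      ((T.farLabels ρ e)ᶜ : Finset X).Nonempty := by
    intro e he
    have hsp := hsplit e he
    rw [splitOf_eq_s17 (SimpleGraph.mem_edgeFinset.mp he) ρ] at hsp
    exact ⟨hsp.1.1 _ (Finset.mem_insert_self _ _),
      hsp.1.1 _ (Finset.mem_insert_of_mem (Finset.mem_singleton_self _))⟩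
  by_cases hzero : h = 0
  · -- no edges at all
    have hne : G.edgeFinset = ∅ := by
      by_contra hne
      obtain ⟨e, he⟩ := Finset.nonempty_of_ne_empty hne
      obtain ⟨x, hx⟩ := (far_ne e he).1
      have : e ∈ sepEdges G ρ (T.lab x) :=
        mem_sepEdges.mpr ⟨SimpleGraph.mem_edgeFinset.mp he, mem_farLabels.mp hx⟩
      have hc := hcardx x
      rw [hzero, Finset.card_eq_zero] at hc
      rw [hc] at this
      simp at this
    refine ⟨0, by simp [IsPartitionSystem], by simp [Hierarchical], ?_⟩
    rw [← hT]
    simp [systemSplits, splits, hne]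
    exact SimpleGraph.edgeFinset_eq_empty.mp hne
  -- main case
  have h1 : 1 ≤ h := Nat.one_le_iff_ne_zero.mpr hzero
  have hdep_mem : ∀ e ∈ G.edgeFinset, 1 ≤ dep G ρ e ∧ dep G ρ e ≤ h := by
    intro e he
    obtain ⟨x, hx⟩ := (far_ne e he).1
    have hesep : e ∈ sepEdges G ρ (T.lab x) :=
      mem_sepEdges.mpr ⟨SimpleGraph.mem_edgeFinset.mp he, mem_farLabels.mp hx⟩
    exact ⟨dep_pos (SimpleGraph.mem_edgeFinset.mp he), (dep_le hesep).trans_eq (hcardx x)⟩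
  -- the unique depth-k edge on the path to x
  have huniq : ∀ (x : X) (k : ℕ), 1 ≤ k → k ≤ h →
      ∃! e, e ∈ sepEdges G ρ (T.lab x) ∧ dep G ρ e = k := by
    intro x k hk1 hk2
    exact rank_bij htree hk1 (by rw [hcardx x]; exact hk2)
  set π : ℕ → Finset (Finset X) :=
    fun k => (G.edgeFinset.filter (fun e => dep G ρ e = k)).image (T.farLabels ρ) with hπ
  set P : Multiset (Finset (Finset X)) := (Multiset.range h).map (fun i => π (i+1)) with hP
  -- membership of a part
  have hmemπ : ∀ {k} {A : Finset X}, A ∈ π k ↔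
      ∃ e ∈ G.edgeFinset, dep G ρ e = k ∧ A = T.farLabels ρ e := by
    intro k A
    simp only [hπ, Finset.mem_image, Finset.mem_filter]
    constructor
    · rintro ⟨e, ⟨he, hd⟩, rfl⟩; exact ⟨e, he, hd, rfl⟩
    · rintro ⟨e, he, hd, rfl⟩; exact ⟨e, ⟨he, hd⟩, rfl⟩
  -- each π k (1 ≤ k ≤ h) is a partition with at least two parts
  have hpart : ∀ k, 1 ≤ k → k ≤ h → IsPartition (π k) ∧ 2 ≤ (π k).card := by
    intro k hk1 hk2
    have hexu : ∀ x : X, ∃ e, (e ∈ sepEdges G ρ (T.lab x) ∧ dep G ρ e = k) ∧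
        x ∈ T.farLabels ρ e ∧ T.farLabels ρ e ∈ π k := by
      intro x
      obtain ⟨e, ⟨hesep, hedep⟩, -⟩ := huniq x k hk1 hk2
      have he' : e ∈ G.edgeFinset := SimpleGraph.mem_edgeFinset.mpr (mem_sepEdges.mp hesep).1
      refine ⟨e, ⟨hesep, hedep⟩, mem_farLabels.mpr (mem_sepEdges.mp hesep).2, ?_⟩
      exact hmemπ.mpr ⟨e, he', hedep, rfl⟩
    have hpartk : IsPartition (π k) := by
      constructor
      · intro A hA
        obtain ⟨e, he, hd, rfl⟩ := hmemπ.mp hA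
        exact (far_ne e he).1
      · intro x
        obtain ⟨e, ⟨hesep, hedep⟩, hxe, hmem⟩ := hexu x
        refine ⟨T.farLabels ρ e, ⟨hmem, hxe⟩, ?_⟩
        rintro A ⟨hA, hxA⟩
        obtain ⟨f, hf, hfd, rfl⟩ := hmemπ.mp hA
        have hfsep : f ∈ sepEdges G ρ (T.lab x) :=
          mem_sepEdges.mpr ⟨SimpleGraph.mem_edgeFinset.mp hf, mem_farLabels.mp hxA⟩
        have := (huniq x k hk1 hk2).unique ⟨hfsep, hfd⟩ ⟨hesep, hedep⟩
        rw [this]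
    refine ⟨hpartk, ?_⟩
    refine Finset.one_lt_card.mpr ?_
    obtain ⟨e, ⟨hesep, hedep⟩, hxe, hmem⟩ := hexu x₀
    have he' : e ∈ G.edgeFinset := SimpleGraph.mem_edgeFinset.mpr (mem_sepEdges.mp hesep).1
    obtain ⟨y, hy⟩ := (far_ne e he').2
    obtain ⟨f, ⟨hfsep, hfdep⟩, hyf, hmemf⟩ := hexu y
    refine ⟨_, hmem, _, hmemf, ?_⟩
    intro hEq
    rw [← hEq] at hyf
    exact (Finset.mem_compl.mp hy) hyf
  have hmemP : ∀ {q}, q ∈ P ↔ ∃ k, 1 ≤ k ∧ k ≤ h ∧ q = π k := by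
    intro q
    simp only [hP, Multiset.mem_map, Multiset.mem_range]
    constructor
    · rintro ⟨i, hi, rfl⟩; exact ⟨i+1, by omega, by omega, rfl⟩
    · rintro ⟨k, hk1, hk2, rfl⟩; exact ⟨k-1, by omega, by congr 1; omega⟩
  refine ⟨P, ?_, ?_, ?_⟩
  · -- partition system
    intro q hq
    obtain ⟨k, hk1, hk2, rfl⟩ := hmemP.mp hq
    exact hpart k hk1 hk2
  · -- hierarchical
    intro q1 hq1 q2 hq2 A hA B hB
    obtain ⟨k1, hk11, hk12, rfl⟩ := hmemP.mp hq1
    obtain ⟨k2, hk21, hk22, rfl⟩ := hmemP.mp hq2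
    obtain ⟨e, he, hde, rfl⟩ := hmemπ.mp hA
    obtain ⟨f, hf, hdf, rfl⟩ := hmemπ.mp hB
    by_cases hd : (T.farLabels ρ e ∩ T.farLabels ρ f).Nonempty
    · obtain ⟨x, hx⟩ := hd
      rw [Finset.mem_inter] at hx
      rcases nest htree (SimpleGraph.mem_edgeFinset.mp he) (SimpleGraph.mem_edgeFinset.mp hf)
        (mem_farLabels.mp hx.1) (mem_farLabels.mp hx.2) with hbel | hbel
      · refine Or.inr (Or.inl (Finset.inter_eq_left.mpr ?_))
        intro z hz
        exact mem_farLabels.mpr (hbel _ (mem_farLabels.mp hz))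
      · refine Or.inr (Or.inr (Finset.inter_eq_right.mpr ?_))
        intro z hz
        exact mem_farLabels.mpr (hbel _ (mem_farLabels.mp hz))
    · exact Or.inl (Finset.not_nonempty_iff_eq_empty.mp hd)
  · -- systemSplits P = S
    have hinj : ∀ k, Set.InjOn (T.farLabels ρ)
        (G.edgeFinset.filter (fun e => dep G ρ e = k)) := by
      intro k e he f hf hEq
      simp only [Finset.coe_filter, Set.mem_setOf_eq] at he hf
      obtain ⟨x, hx⟩ := (far_ne e he.1).1
      have hxf : x ∈ T.farLabels ρ f := hEq ▸ hx
      have hk1 : 1 ≤ k := he.2 ▸ (hdep_mem e he.1).1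
      have hk2 : k ≤ h := he.2 ▸ (hdep_mem e he.1).2
      have hesep : e ∈ sepEdges G ρ (T.lab x) :=
        mem_sepEdges.mpr ⟨SimpleGraph.mem_edgeFinset.mp he.1, mem_farLabels.mp hx⟩
      have hfsep : f ∈ sepEdges G ρ (T.lab x) :=
        mem_sepEdges.mpr ⟨SimpleGraph.mem_edgeFinset.mp hf.1, mem_farLabels.mp hxf⟩
      exact (huniq x k hk1 hk2).unique ⟨hesep, he.2⟩ ⟨hfsep, hf.2⟩
    have hval : ∀ k, (π k).val =
        (G.edgeFinset.filter (fun e => dep G ρ e = k)).val.map (T.farLabels ρ) := by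
      intro k
      exact Finset.image_val_of_injOn (hinj k)
    have hbindval : (Multiset.range h).bind
        (fun i => (G.edgeFinset.filter (fun e => dep G ρ e = i+1)).val) =
        G.edgeFinset.val := by
      apply Multiset.ext.mpr
      intro e
      rw [Multiset.count_bind]
      by_cases he : e ∈ G.edgeFinset
      · obtain ⟨hd1, hd2⟩ := hdep_mem e he
        have hmapeq : (Multiset.range h).map
            (fun i => ((G.edgeFinset.filter (fun e' => dep G ρ e' = i+1)).val.count e)) =
            (Multiset.range h).map (fun i => if i = dep G ρ e - 1 then 1 else 0) := by
          apply Multiset.map_congr rfl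
          intro i hi
          by_cases hdi : i = dep G ρ e - 1
          · rw [if_pos hdi]
            have hdi' : dep G ρ e = i + 1 := by omega
            have : e ∈ (G.edgeFinset.filter (fun e' => dep G ρ e' = i+1)) :=
              Finset.mem_filter.mpr ⟨he, hdi'⟩
            exact Multiset.count_eq_one_of_mem (G.edgeFinset.filter _).nodup this
          · rw [if_neg hdi]
            rw [Multiset.count_eq_zero]
            intro hc
            have := (Finset.mem_filter.mp hc).2
            omega
        rw [hmapeq]
        have hce : G.edgeFinset.val.count e = 1 :=
          Multiset.count_eq_one_of_mem G.edgeFinset.nodup he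
        rw [hce]
        have : Multiset.range h = (Finset.range h).val := rfl
        rw [this, ← Finset.sum_eq_multiset_sum]
        rw [Finset.sum_ite_eq' (Finset.range h) (dep G ρ e - 1) (fun _ => 1)]
        rw [if_pos (Finset.mem_range.mpr (by omega))]
      · have hce : G.edgeFinset.val.count e = 0 :=
          Multiset.count_eq_zero.mpr (by simpa using he)
        rw [hce]
        apply Multiset.sum_eq_zero
        intro n hn
        obtain ⟨i, hi, rfl⟩ := Multiset.mem_map.mp hn
        rw [Multiset.count_eq_zero]
        intro hc
        exact he (Finset.mem_filter.mp hc).1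
    calc systemSplits P
        = (Multiset.range h).bind (fun i => partitionSplits (π (i+1))) := by
          rw [hP]; exact Multiset.bind_map _ _ _
      _ = (Multiset.range h).bind
            (fun i => (G.edgeFinset.filter (fun e => dep G ρ e = i+1)).val.map T.splitOf) := by
          apply congrArg
          funext i
          rw [partitionSplits, hval (i+1), Multiset.map_map]
          apply Multiset.map_congr rfl
          intro e he
          have he' : e ∈ G.edgeFinset := (Finset.mem_filter.mp he).1
          exact (splitOf_eq_s17 (SimpleGraph.mem_edgeFinset.mp he') ρ).symm
      _ = (((Multiset.range h).bind
            (fun i => (G.edgeFinset.filter (fun e => dep G ρ e = i+1)).val)).map T.splitOf) := by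
          rw [Multiset.map_bind]
      _ = G.edgeFinset.val.map T.splitOf := by rw [hbindval]
      _ = S := hT

open TreeAux WeakXTree in
theorem forward_dir {X : Type} [Fintype X] [DecidableEq X] (hX : 2 ≤ Fintype.card X)
    (S : Multiset (Finset (Finset X))) (hS : IsSplitSystem S)
    (T : WeakXTree X) (hT : T.splits = S)
    (P : Multiset (Finset (Finset X))) (hPP : IsPartitionSystem P)
    (hH : Hierarchical P) (hPS : systemSplits P = S) :
    ∃ ρ : T.V, ∀ u v : T.V, u ∈ Set.range T.lab → v ∈ Set.range T.lab →
      T.G.dist ρ u = T.G.dist ρ v := by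
  have hXne : Nonempty X := Fintype.card_pos_iff.mp (by omega)
  obtain ⟨x₀⟩ := hXne
  set G := T.G with hG
  have htree : G.IsTree := T.isTree
  set Q : Multiset (Finset X) := P.bind Finset.val with hQ
  set gA : Finset X → Finset (Finset X) := fun A => ({A, Aᶜ} : Finset (Finset X)) with hgA
  have heq : G.edgeFinset.val.map T.splitOf = Q.map gA := by
    have h2 : Q.map gA = systemSplits P := by
      rw [hQ, systemSplits, Multiset.map_bind]
      rfl
    rw [h2, hPS, ← hT]
    rfl
  have hrel : Multiset.Rel (fun e A => T.splitOf e = gA A) G.edgeFinset.val Q :=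
    Multiset.rel_map.mp (Multiset.rel_eq.mpr heq)
  -- per-edge translation
  have hkey : ∀ (x y : X) (e : Sym2 T.V) (A : Finset X), e ∈ G.edgeFinset.val →
      T.splitOf e = gA A →
      (Sep G e (T.lab x) (T.lab y) ↔ Xor' (x ∈ A) (y ∈ A)) := by
    intro x y e A he hA
    have heE : e ∈ G.edgeSet := SimpleGraph.mem_edgeFinset.mp he
    set F := T.farLabels (T.lab y) e with hF
    have hsp : T.splitOf e = {F, Fᶜ} := splitOf_eq_s17 heE (T.lab y)
    have hAmem : A ∈ ({F, Fᶜ} : Finset (Finset X)) := by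
      rw [← hsp, hA]
      exact Finset.mem_insert_self _ _
    have hyF : y ∉ F := fun c => not_sep_self e (T.lab y) (mem_farLabels.mp c)
    have hxiff : x ∈ F ↔ Sep G e (T.lab x) (T.lab y) := by
      rw [mem_farLabels]
      exact ⟨fun c => sep_symm c, fun c => sep_symm c⟩
    rcases Finset.mem_insert.mp hAmem with rfl | hA2
    · constructor
      · intro hsep
        exact Or.inl ⟨hxiff.mpr hsep, hyF⟩
      · rintro (⟨hx, -⟩ | ⟨hy, -⟩)
        · exact hxiff.mp hx
        · exact (hyF hy).elim
    · rw [Finset.mem_singleton.mp hA2]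
      constructor
      · intro hsep
        exact Or.inr ⟨Finset.mem_compl.mpr hyF,
          fun c => (Finset.mem_compl.mp c) (hxiff.mpr hsep)⟩
      · rintro (⟨-, hny⟩ | ⟨-, hnx⟩)
        · exact (hny (Finset.mem_compl.mpr hyF)).elim
        · refine hxiff.mp ?_
          by_contra hxF
          exact hnx (Finset.mem_compl.mpr hxF)
  -- distance through the partition system
  have hdist : ∀ x y : X, G.dist (T.lab x) (T.lab y) =
      Multiset.card (Q.filter (fun A => Xor' (x ∈ A) (y ∈ A))) := by
    intro x y
    rw [← card_sepEdges htree (T.lab x) (T.lab y)]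
    have h1 : (sepEdges G (T.lab x) (T.lab y)).card =
        Multiset.card (G.edgeFinset.val.filter (fun e => Sep G e (T.lab x) (T.lab y))) := by
      rfl
    rw [h1]
    exact rel_count hrel _ _ (fun e A he hr => hkey x y e A he hr)
  have cx : ∀ x : X, Multiset.card (Q.filter (fun A => x ∈ A)) = Multiset.card P :=
    count_parts P (fun π hπ => (hPP π hπ).1)
  have hiden : ∀ x y : X, G.dist (T.lab x) (T.lab y) +
      2 * Multiset.card (Q.filter (fun A => x ∈ A ∧ y ∈ A)) = 2 * Multiset.card P := by
    intro x y
    have := xor_count Q (fun A => x ∈ A) (fun A => y ∈ A)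
    rw [cx x, cx y, ← hdist x y] at this
    omega
  have hQH : ∀ A ∈ Q, ∀ B ∈ Q, A ∩ B = ∅ ∨ A ∩ B = A ∨ A ∩ B = B := by
    intro A hA B hB
    obtain ⟨π₁, hπ₁, hA1⟩ := Multiset.mem_bind.mp hA
    obtain ⟨π₂, hπ₂, hB1⟩ := Multiset.mem_bind.mp hB
    exact hH π₁ hπ₁ π₂ hπ₂ A hA1 B hB1
  -- a diametral pair
  obtain ⟨⟨u, v⟩, -, hmax⟩ := Finset.exists_max_image
    (Finset.univ ×ˢ Finset.univ : Finset (X × X))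
    (fun pr => G.dist (T.lab pr.1) (T.lab pr.2))
    ⟨(x₀, x₀), Finset.mem_product.mpr ⟨Finset.mem_univ _, Finset.mem_univ _⟩⟩
  have hmax' : ∀ x y : X, G.dist (T.lab x) (T.lab y) ≤ G.dist (T.lab u) (T.lab v) :=
    fun x y => hmax (x, y) (Finset.mem_product.mpr ⟨Finset.mem_univ _, Finset.mem_univ _⟩)
  by_cases hD0 : G.dist (T.lab u) (T.lab v) = 0
  · refine ⟨T.lab u, ?_⟩
    rintro a b ⟨x, rfl⟩ ⟨y, rfl⟩
    have h1 := hmax' u x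
    have h2 := hmax' u y
    omega
  -- main case
  have hidU := hiden u v
  obtain ⟨k, hk⟩ : ∃ k, G.dist (T.lab u) (T.lab v) = 2 * k :=
    ⟨Multiset.card P - Multiset.card (Q.filter (fun A => u ∈ A ∧ v ∈ A)), by omega⟩
  obtain ⟨m, hm1, hm2⟩ := exists_mid htree (T.lab u) (T.lab v) k (by omega)
  have claim : ∀ x : X, G.dist m (T.lab x) = k := by
    intro x
    have hxle1 : G.dist (T.lab u) (T.lab x) ≤ G.dist (T.lab u) (T.lab v) := hmax' u x
    have hxle2 : G.dist (T.lab v) (T.lab x) ≤ G.dist (T.lab u) (T.lab v) := hmax' v x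
    have hor : G.dist (T.lab u) (T.lab x) = G.dist (T.lab u) (T.lab v) ∨
        G.dist (T.lab v) (T.lab x) = G.dist (T.lab u) (T.lab v) := by
      by_contra hc
      rw [not_or] at hc
      have hiux := hiden u x
      have hixv := hiden x v
      have hvx : G.dist (T.lab v) (T.lab x) = G.dist (T.lab x) (T.lab v) :=
        SimpleGraph.dist_comm
      have hmin := common_min hQH u x v
      have h1 : Multiset.card (Q.filter (fun A => u ∈ A ∧ v ∈ A)) + 1 ≤
          Multiset.card (Q.filter (fun A => u ∈ A ∧ x ∈ A)) := by omega
      have h2 : Multiset.card (Q.filter (fun A => u ∈ A ∧ v ∈ A)) + 1 ≤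
          Multiset.card (Q.filter (fun A => x ∈ A ∧ v ∈ A)) := by omega
      have h3 := le_trans (le_min h1 h2) hmin
      omega
    rcases hor with hcase | hcase
    · exact mid_dist htree hm1 hm2 (by omega) (by omega) (by omega)
    · have hvu : G.dist (T.lab v) (T.lab u) = G.dist (T.lab u) (T.lab v) :=
        SimpleGraph.dist_comm
      have h3 : G.dist m (T.lab v) = G.dist (T.lab v) m := SimpleGraph.dist_comm
      have h4 : G.dist m (T.lab u) = G.dist (T.lab u) m := SimpleGraph.dist_comm
      have hmv : G.dist (T.lab v) m = k := by omega
      have hadd2 : G.dist (T.lab v) m + G.dist m (T.lab u) = G.dist (T.lab v) (T.lab u) := by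
        omega
      exact mid_dist htree hmv hadd2 (by omega) (by omega) (by omega)
  refine ⟨m, ?_⟩
  rintro a b ⟨x, rfl⟩ ⟨y, rfl⟩
  rw [claim x, claim y]


/-- for a compatible split system `Σ` there is a hierarchical
partition system `Π` with `Σ_Π = Σ` iff `T_Σ` has a vertex `ρ` equidistant from
all labelled vertices. -/
theorem stmt_17 {X : Type} [Fintype X] [DecidableEq X] (hX : 2 ≤ Fintype.card X)
    (S : Multiset (Finset (Finset X))) (hS : IsSplitSystem S)
    (hcomp : CompatibleSystem S)
    (T : WeakXTree X) (hT : T.splits = S) :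
    (∃ P : Multiset (Finset (Finset X)),
        IsPartitionSystem P ∧ Hierarchical P ∧ systemSplits P = S) ↔
      ∃ ρ : T.V, ∀ u v : T.V, u ∈ Set.range T.lab → v ∈ Set.range T.lab →
        T.G.dist ρ u = T.G.dist ρ v := by
  constructor
  · rintro ⟨P, hPP, hH, hPS⟩
    exact forward_dir hX S hS T hT P hPP hH hPS
  · rintro ⟨ρ, hρ⟩
    exact backward_dir hX S hS T hT ρ hρ
end
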